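/- arXiv:1712.00875 — 4 statements merged into one kernel-verified Lean document; each statement's English description precedes it below -/
import Mathlib

section
/- For a locally finite weighted graph with Laplacian Δ and combinatorial distance d, for vertices x ≠ y, the limit κ(x,y) := lim_{ε→0+} (1/ε)(1 - W(m_x^ε, m_y^ε)/d(x,y)) equals the infimum of ∇_{xy} Δf := (Δf(x) - Δf(y))/d(x,y) over all finitely supported functions f with Lipschitz constant at most 1 (with respect to d) satisfying (f(y)-f(x))/d(x,y) = 1. -/
open scoped BigOperators

/-- A locally finite weighted graph. -/
structure WeightedGraph (V : Type) where
  w : V → V → ℝ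
  m : V → ℝ
  symm : ∀ x y, w x y = w y x
  loopless : ∀ x, w x x = 0
  nonneg : ∀ x y, 0 ≤ w x y
  mpos : ∀ x, 0 < m x
  locFin : ∀ x, Set.Finite {y | w x y ≠ 0}

namespace WeightedGraph

variable {V : Type} (G : WeightedGraph V)

/-- The underlying simple graph. -/
def toSimple : SimpleGraph V where
  Adj x y := x ≠ y ∧ G.w x y ≠ 0
  symm := by
    constructor
    intro x y h
    exact ⟨h.1.symm, by rw [G.symm y x]; exact h.2⟩
  loopless := by constructor; intro x h; exact h.1 rfl

/-- The combinatorial graph distance. -/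
noncomputable def dist (x y : V) : ℕ := G.toSimple.dist x y

/-- The graph Laplacian. -/
noncomputable def lap (f : V → ℝ) (x : V) : ℝ :=
  (∑ᶠ y, G.w x y * (f y - f x)) / G.m x

/-- The weighted vertex degree. -/
noncomputable def deg (x : V) : ℝ := (∑ᶠ y, G.w x y) / G.m x

/-- `f` is `1`-Lipschitz with respect to the combinatorial distance. -/
def Lip1 (f : V → ℝ) : Prop := ∀ x y, |f x - f y| ≤ (G.dist x y : ℝ)

/-- The Ollivier curvature, via the limit-free formula
`κ(x,y) = inf {∇_{xy} Δ f : f ∈ Lip(1) ∩ C_c(V), ∇_{yx} f = 1}`. -/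
noncomputable def curv (x y : V) : ℝ :=
  sInf { c | ∃ f : V → ℝ, G.Lip1 f ∧ (Function.support f).Finite ∧
    f y - f x = (G.dist x y : ℝ) ∧ c = (G.lap f x - G.lap f y) / (G.dist x y : ℝ) }

end WeightedGraph

/-- The L¹-Wasserstein distance with cost the combinatorial distance,
via Kantorovich duality: supremum over bounded 1-Lipschitz functions. -/
noncomputable def Wass {V : Type} (G : WeightedGraph V) (μ ν : V → ℝ) : ℝ :=
  sSup { c | ∃ f : V → ℝ, G.Lip1 f ∧ (∃ C, ∀ x, |f x| ≤ C) ∧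
    c = ∑' x, f x * (μ x - ν x) }

/-- The first-order-in-`ε` lazy random walk measure `m_x^ε(y) = 1_y(x) + ε Δ1_y(x)`. -/
noncomputable def ollMeas {V : Type} [DecidableEq V] (G : WeightedGraph V) (ε : ℝ) (x : V) : V → ℝ :=
  fun y => (if y = x then 1 else 0) + ε * G.lap (fun z => if z = y then (1 : ℝ) else 0) x

/-! ### Auxiliary development -/

namespace WeightedGraph

variable {V : Type} (G : WeightedGraph V)

/-- The neighbours of `x`, as a finset. -/
noncomputable def nbr (x : V) : Finset V := (G.locFin x).toFinset

lemma mem_nbr {x z : V} : z ∈ G.nbr x ↔ G.w x z ≠ 0 := (G.locFin x).mem_toFinset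

lemma not_mem_nbr_self (x : V) : x ∉ G.nbr x := by
  rw [mem_nbr]
  simp [G.loopless x]

lemma ne_of_mem_nbr {x z : V} (h : z ∈ G.nbr x) : z ≠ x :=
  fun hzx => G.not_mem_nbr_self x (hzx ▸ h)

lemma dist_def (a b : V) : G.dist a b = G.toSimple.dist a b := rfl

lemma dist_symm (a b : V) : G.dist a b = G.dist b a := SimpleGraph.dist_comm

lemma dist_self' (a : V) : G.dist a a = 0 := SimpleGraph.dist_self

lemma dist_nbr_one {x z : V} (h : z ∈ G.nbr x) : G.dist x z = 1 :=
  SimpleGraph.dist_eq_one_iff_adj.mpr ⟨(G.ne_of_mem_nbr h).symm, G.mem_nbr.mp h⟩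

/-- The normalized degree, as a finite sum. -/
noncomputable def degS (x : V) : ℝ := (∑ z ∈ G.nbr x, G.w x z) / G.m x

lemma degS_nonneg (x : V) : 0 ≤ G.degS x :=
  div_nonneg (Finset.sum_nonneg fun z _ => G.nonneg x z) (G.mpos x).le

lemma lap_eq_sum (f : V → ℝ) (x : V) :
    G.lap f x = (∑ z ∈ G.nbr x, G.w x z * (f z - f x)) / G.m x := by
  unfold lap
  congr 1
  refine finsum_eq_sum_of_support_subset _ ?_
  intro z hz
  have hw : G.w x z ≠ 0 := by
    intro h
    apply hz
    simp [Function.mem_support, h]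
  simpa [mem_nbr] using hw

lemma lap_le_lap_add (f g : V → ℝ) (x : V) (c : ℝ)
    (h : ∀ z ∈ G.nbr x, f z - f x ≤ (g z - g x) + c) :
    G.lap f x ≤ G.lap g x + c * G.degS x := by
  have hm := G.mpos x
  rw [lap_eq_sum, lap_eq_sum, degS, mul_div_assoc' , ← add_div]
  gcongr ?_ / _
  have : (∑ z ∈ G.nbr x, G.w x z * (g z - g x)) + c * ∑ z ∈ G.nbr x, G.w x z
      = ∑ z ∈ G.nbr x, G.w x z * ((g z - g x) + c) := by
    rw [Finset.mul_sum, ← Finset.sum_add_distrib]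
    congr 1; funext z; ring
  rw [this]
  refine Finset.sum_le_sum fun z hz => ?_
  exact mul_le_mul_of_nonneg_left (h z hz) (G.nonneg x z)

lemma abs_lap_le_of_lip1 {f : V → ℝ} (hf : G.Lip1 f) (x : V) : |G.lap f x| ≤ G.degS x := by
  have hm := G.mpos x
  rw [lap_eq_sum, degS, abs_div, abs_of_pos hm]
  gcongr ?_ / _
  refine (Finset.abs_sum_le_sum_abs _ _).trans ?_
  refine Finset.sum_le_sum fun z hz => ?_
  rw [abs_mul, abs_of_nonneg (G.nonneg x z)]
  have hdist : G.dist z x = 1 := by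
    rw [G.dist_symm]
    exact G.dist_nbr_one hz
  have h5 := hf z x
  rw [hdist] at h5
  calc G.w x z * |f z - f x| ≤ G.w x z * 1 := by
        refine mul_le_mul_of_nonneg_left ?_ (G.nonneg x z)
        simpa using h5
    _ = G.w x z := mul_one _

lemma lap_neg (f : V → ℝ) (x : V) : G.lap (fun z => -f z) x = -G.lap f x := by
  rw [lap_eq_sum, lap_eq_sum, ← neg_div, ← Finset.sum_neg_distrib]
  congr 1
  refine Finset.sum_congr rfl fun z _ => by ring

lemma lap_sub_const (f : V → ℝ) (c : ℝ) (x : V) :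
    G.lap (fun z => f z - c) x = G.lap f x := by
  rw [lap_eq_sum, lap_eq_sum]
  congr 1
  refine Finset.sum_congr rfl fun z _ => by ring

lemma lap_congr (f g : V → ℝ) (x : V) (hx : f x = g x)
    (h : ∀ z ∈ G.nbr x, f z = g z) : G.lap f x = G.lap g x := by
  rw [lap_eq_sum, lap_eq_sum]
  congr 1
  refine Finset.sum_congr rfl fun z hz => by rw [h z hz, hx]

end WeightedGraph

section OllMeasLemmas

open WeightedGraph

variable {V : Type} [DecidableEq V] (G : WeightedGraph V)

lemma ollMeas_eq (ε : ℝ) (x z : V) :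
    ollMeas G ε x z = if z = x then 1 - ε * G.degS x else ε * (G.w x z / G.m x) := by
  unfold ollMeas
  rw [G.lap_eq_sum]
  by_cases hzx : z = x
  · subst hzx
    rw [if_pos rfl, if_pos rfl]
    have : ∑ u ∈ G.nbr z, G.w z u * ((if u = z then (1:ℝ) else 0) - 1)
        = -∑ u ∈ G.nbr z, G.w z u := by
      rw [← Finset.sum_neg_distrib]
      refine Finset.sum_congr rfl fun u hu => ?_
      rw [if_neg (G.ne_of_mem_nbr hu)]
      ring
    rw [this, degS]
    ring
  · rw [if_neg hzx, if_neg hzx]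
    rw [if_neg (fun h : x = z => hzx h.symm)]
    have : ∑ u ∈ G.nbr x, G.w x u * ((if u = z then (1:ℝ) else 0) - 0)
        = ∑ u ∈ G.nbr x, (if u = z then G.w x u else 0) := by
      refine Finset.sum_congr rfl fun u hu => ?_
      by_cases h : u = z <;> simp [h]
    rw [this, Finset.sum_ite_eq' (G.nbr x) z (fun u => G.w x u)]
    by_cases hz : z ∈ G.nbr x
    · rw [if_pos hz]; ring
    · rw [if_neg hz]
      have : G.w x z = 0 := by
        by_contra h
        exact hz (G.mem_nbr.mpr h)
      rw [this]
      ring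

lemma ollMeas_support (ε : ℝ) (x z : V) (hz : z ∉ insert x (G.nbr x)) :
    ollMeas G ε x z = 0 := by
  rw [Finset.mem_insert, not_or] at hz
  rw [ollMeas_eq, if_neg hz.1]
  have : G.w x z = 0 := by
    by_contra h
    exact hz.2 (G.mem_nbr.mpr h)
  rw [this]
  simp

lemma tsum_mul_ollMeas (ε : ℝ) (x : V) (f : V → ℝ) :
    ∑' z, f z * ollMeas G ε x z = f x + ε * G.lap f x := by
  rw [tsum_eq_sum (s := insert x (G.nbr x))
    (fun z hz => by rw [ollMeas_support G ε x z hz, mul_zero])]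
  rw [Finset.sum_insert (G.not_mem_nbr_self x)]
  have h1 : ∀ z ∈ G.nbr x, f z * ollMeas G ε x z = ε * (G.w x z * f z) / G.m x := by
    intro z hz
    rw [ollMeas_eq, if_neg (G.ne_of_mem_nbr hz)]
    ring
  rw [Finset.sum_congr rfl h1, ollMeas_eq, if_pos rfl, G.lap_eq_sum, WeightedGraph.degS]
  have hm := (G.mpos x).ne'
  have hsub : ∑ z ∈ G.nbr x, G.w x z * (f z - f x)
      = (∑ z ∈ G.nbr x, G.w x z * f z) - (∑ z ∈ G.nbr x, G.w x z) * f x := by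
    rw [Finset.sum_mul, ← Finset.sum_sub_distrib]
    refine Finset.sum_congr rfl fun z _ => by ring
  rw [hsub]
  have h2 : ∑ z ∈ G.nbr x, ε * (G.w x z * f z) / G.m x
      = ε * (∑ z ∈ G.nbr x, G.w x z * f z) / G.m x := by
    rw [← Finset.sum_div, ← Finset.mul_sum]
  rw [h2]
  field_simp
  ring

lemma summable_mul_ollMeas (ε : ℝ) (x : V) (f : V → ℝ) :
    Summable (fun z => f z * ollMeas G ε x z) :=
  summable_of_ne_finset_zero (s := insert x (G.nbr x))
    (fun z hz => by rw [ollMeas_support G ε x z hz, mul_zero])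

lemma tsum_wass_eq (ε : ℝ) (x y : V) (f : V → ℝ) :
    ∑' z, f z * (ollMeas G ε x z - ollMeas G ε y z)
      = (f x - f y) + ε * (G.lap f x - G.lap f y) := by
  have : (fun z => f z * (ollMeas G ε x z - ollMeas G ε y z))
      = fun z => f z * ollMeas G ε x z - f z * ollMeas G ε y z := by
    funext z; ring
  rw [this, Summable.tsum_sub (summable_mul_ollMeas G ε x f) (summable_mul_ollMeas G ε y f),
    tsum_mul_ollMeas, tsum_mul_ollMeas]
  ring

end OllMeasLemmas

/-! ### Lipschitz lemmas -/

namespace WeightedGraph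

variable {V : Type} (G : WeightedGraph V)

lemma lip1_const (c : ℝ) : G.Lip1 (fun _ => c) := by
  intro a b
  simp [Nat.cast_nonneg]

lemma lip1_neg {f : V → ℝ} (hf : G.Lip1 f) : G.Lip1 (fun z => -f z) := by
  intro a b
  have h : -f a - -f b = -(f a - f b) := by ring
  show |-f a - -f b| ≤ _
  rw [h, abs_neg]
  exact hf a b

lemma lip1_max {f g : V → ℝ} (hf : G.Lip1 f) (hg : G.Lip1 g) :
    G.Lip1 (fun z => max (f z) (g z)) := by
  intro a b
  refine (abs_max_sub_max_le_max _ _ _ _).trans ?_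
  exact max_le (hf a b) (hg a b)

lemma lip1_min {f g : V → ℝ} (hf : G.Lip1 f) (hg : G.Lip1 g) :
    G.Lip1 (fun z => min (f z) (g z)) := by
  intro a b
  refine (abs_min_sub_min_le_max _ _ _ _).trans ?_
  exact max_le (hf a b) (hg a b)

lemma lip1_sub_const {f : V → ℝ} (hf : G.Lip1 f) (c : ℝ) :
    G.Lip1 (fun z => f z - c) := by
  intro a b
  simpa using hf a b

lemma dist_triangle' (hconn : G.toSimple.Connected) (a b c : V) :
    G.dist a c ≤ G.dist a b + G.dist b c := hconn.dist_triangle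

lemma lip1_dist (hconn : G.toSimple.Connected) (y : V) :
    G.Lip1 (fun z => (G.dist y z : ℝ)) := by
  intro a b
  show |(G.toSimple.dist y a : ℝ) - (G.toSimple.dist y b : ℝ)| ≤ (G.toSimple.dist a b : ℝ)
  have h1 : G.toSimple.dist y a ≤ G.toSimple.dist y b + G.toSimple.dist b a :=
    hconn.dist_triangle
  have h2 : G.toSimple.dist y b ≤ G.toSimple.dist y a + G.toSimple.dist a b :=
    hconn.dist_triangle
  have hc : G.toSimple.dist b a = G.toSimple.dist a b := SimpleGraph.dist_comm
  rw [abs_sub_le_iff]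
  constructor
  · rw [sub_le_iff_le_add]
    have : G.toSimple.dist y a ≤ G.toSimple.dist a b + G.toSimple.dist y b := by omega
    exact_mod_cast this
  · rw [sub_le_iff_le_add]
    have : G.toSimple.dist y b ≤ G.toSimple.dist a b + G.toSimple.dist y a := by omega
    exact_mod_cast this

lemma lip1_const_sub {f : V → ℝ} (hf : G.Lip1 f) (c : ℝ) :
    G.Lip1 (fun z => c - f z) := by
  intro a b
  simpa [abs_sub_comm] using hf a b

end WeightedGraph

/-! ### Finite balls -/

section Balls

open WeightedGraph

variable {V : Type} (G : WeightedGraph V)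

lemma ball_finite (hconn : G.toSimple.Connected) (y : V) (n : ℕ) :
    {z | G.toSimple.dist y z ≤ n}.Finite := by
  induction n with
  | zero =>
    refine Set.Finite.subset (Set.finite_singleton y) ?_
    intro z hz
    simp only [Set.mem_setOf_eq, Nat.le_zero] at hz
    have := hconn.dist_eq_zero_iff.mp hz
    simp [this.symm]
  | succ n ih =>
    refine Set.Finite.subset (ih.union (Set.Finite.biUnion ih fun u _ => G.locFin u)) ?_
    intro z hz
    simp only [Set.mem_setOf_eq] at hz
    by_cases h : G.toSimple.dist y z ≤ n
    · exact Or.inl h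
    · have hd : G.toSimple.dist y z = n + 1 := le_antisymm hz (not_le.1 h)
      have hne : z ≠ y := by
        rintro rfl
        simp [SimpleGraph.dist_self] at hd
      obtain ⟨p, hp⟩ := (hconn y z).exists_walk_length_eq_dist
      obtain ⟨u, hadj, q, hq⟩ := SimpleGraph.Walk.exists_eq_cons_of_ne hne p.reverse
      have hlen : q.length = n := by
        have h1 : p.reverse.length = n + 1 := by
          rw [SimpleGraph.Walk.length_reverse, hp, hd]
        rw [hq] at h1
        simpa using h1
      have hu : G.toSimple.dist y u ≤ n := by
        have : G.toSimple.dist u y ≤ q.length := SimpleGraph.dist_le q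
        rw [hlen] at this
        rwa [SimpleGraph.dist_comm] at this
      right
      refine Set.mem_biUnion hu ?_
      have : G.w z u ≠ 0 := hadj.2
      simp only [Set.mem_setOf_eq]
      rw [G.symm u z]
      exact this

end Balls

/-! ### Truncation and the key modification lemma -/

namespace WeightedGraph

variable {V : Type} (G : WeightedGraph V)

lemma bounded_of_finite_support {f : V → ℝ} (hf : (Function.support f).Finite) :
    ∃ C, ∀ z, |f z| ≤ C := by
  classical
  refine ⟨∑ z ∈ hf.toFinset, |f z|, fun z => ?_⟩
  by_cases hz : z ∈ hf.toFinset
  · exact Finset.single_le_sum (f := fun z => |f z|) (fun i _ => abs_nonneg _) hz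
  · have : f z = 0 := by
      by_contra h
      exact hz (hf.mem_toFinset.mpr h)
    rw [this, abs_zero]
    exact Finset.sum_nonneg fun i _ => abs_nonneg _

lemma exists_truncation (hconn : G.toSimple.Connected) (y : V) (g0 : V → ℝ)
    (hg0 : G.Lip1 g0) (hy : g0 y = 0) (S : Finset V) :
    ∃ g : V → ℝ, G.Lip1 g ∧ (Function.support g).Finite ∧ ∀ z ∈ S, g z = g0 z := by
  classical
  set N : ℕ := S.sup (fun z => G.dist y z) with hN
  set R : ℕ := 2 * N + 2 with hR
  set c : V → ℝ := fun z => max ((R : ℝ) - (G.dist y z : ℝ)) 0 with hc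
  have hcLip : G.Lip1 c := G.lip1_max (G.lip1_const_sub (G.lip1_dist hconn y) _) (G.lip1_const 0)
  refine ⟨fun z => max (min (g0 z) (c z)) (-(c z)), ?_, ?_, ?_⟩
  · exact G.lip1_max (G.lip1_min hg0 hcLip) (G.lip1_neg hcLip)
  · refine Set.Finite.subset (ball_finite G hconn y R) ?_
    intro z hz
    simp only [Function.mem_support] at hz
    simp only [Set.mem_setOf_eq]
    by_contra hdist
    push_neg at hdist
    have hc0 : c z = 0 := by
      have : (R : ℝ) - (G.dist y z : ℝ) ≤ 0 := by
        rw [sub_nonpos]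
        exact_mod_cast hdist.le
      simp [hc, max_eq_right this]
    apply hz
    rw [hc0]
    have : min (g0 z) (0:ℝ) ≤ 0 := min_le_right _ _
    simp [max_eq_right this]
  · intro z hzS
    have hdistz : G.dist y z ≤ N := Finset.le_sup (f := fun z => G.dist y z) hzS
    have habs : |g0 z| ≤ (G.dist y z : ℝ) := by
      have h12 := hg0 z y
      rw [hy, sub_zero, G.dist_symm z y] at h12
      exact h12
    have hNR : (N : ℝ) ≤ (R : ℝ) := by
      have h8 : N ≤ R := by omega
      exact_mod_cast h8
    have hcz : c z = (R : ℝ) - (G.dist y z : ℝ) := by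
      refine max_eq_left ?_
      rw [sub_nonneg]
      have h9 : (G.dist y z : ℝ) ≤ (N : ℝ) := by exact_mod_cast hdistz
      linarith
    have hbig : (G.dist y z : ℝ) ≤ c z := by
      rw [hcz]
      have h10 : G.dist y z + G.dist y z ≤ R := by omega
      have h11 : (G.dist y z : ℝ) + (G.dist y z : ℝ) ≤ (R : ℝ) := by exact_mod_cast h10
      linarith
    have h1 : g0 z ≤ c z := (le_abs_self _).trans (habs.trans hbig)
    have h2 : -(c z) ≤ g0 z := by
      have := (neg_abs_le (g0 z))
      have h3 : -(c z) ≤ -|g0 z| := neg_le_neg (habs.trans hbig)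
      linarith
    simp only [min_eq_left h1, max_eq_left h2]

lemma key_modify (hconn : G.toSimple.Connected) (x y : V) (hxy : x ≠ y) (f : V → ℝ)
    (hf : G.Lip1 f) :
    ∃ g : V → ℝ, G.Lip1 g ∧ (Function.support g).Finite ∧
      g x = (G.dist x y : ℝ) ∧ g y = 0 ∧
      G.lap f x ≤ G.lap g x + ((G.dist x y : ℝ) - (f x - f y)) * G.degS x ∧
      G.lap g y ≤ G.lap f y + ((G.dist x y : ℝ) - (f x - f y)) * G.degS y := by
  classical
  set d : ℝ := (G.dist x y : ℝ) with hdd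
  set t : ℝ := d - (f x - f y) with htt
  have ht : 0 ≤ t := by
    have := hf x y
    have h1 : f x - f y ≤ d := (le_abs_self _).trans this
    linarith
  set f0 : V → ℝ := fun z => f z - f y with hf0
  have hf0Lip : G.Lip1 f0 := G.lip1_sub_const hf _
  have hf0x : f0 x = d - t := by simp [hf0, htt]
  have hf0y : f0 y = 0 := by simp [hf0]
  set h1 : V → ℝ := fun z => max (f0 z) (d - (G.dist x z : ℝ)) with hh1
  have hh1Lip : G.Lip1 h1 := G.lip1_max hf0Lip (G.lip1_const_sub (G.lip1_dist hconn x) _)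
  set g0 : V → ℝ := fun z => min (h1 z) ((G.dist y z : ℝ)) with hg0
  have hg0Lip : G.Lip1 g0 := G.lip1_min hh1Lip (G.lip1_dist hconn y)
  have hdyx : (G.dist y x : ℝ) = d := by
    rw [hdd, G.dist_symm y x]
  have hg0x : g0 x = d := by
    have hhx : h1 x = d := by
      simp only [hh1]
      rw [G.dist_self' x]
      push_cast
      rw [sub_zero, hf0x]
      exact max_eq_right (by linarith)
    simp only [hg0, hhx, hdyx]
    exact min_self d
  have hg0y : g0 y = 0 := by
    have hhy : h1 y = 0 := by
      simp only [hh1, hf0y]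
      rw [show (G.dist x y : ℝ) = d from rfl]
      simp
    simp only [hg0, hhy]
    rw [G.dist_self' y]
    simp
  have hlow : ∀ z, f0 z ≤ g0 z := by
    intro z
    refine le_min (le_max_left _ _) ?_
    have := hf0Lip z y
    rw [hf0y, sub_zero] at this
    have h2 : f0 z ≤ (G.dist z y : ℝ) := (le_abs_self _).trans this
    rwa [G.dist_symm z y] at h2
  have hhigh : ∀ z, g0 z ≤ f0 z + t := by
    intro z
    refine (min_le_left _ _).trans (max_le (by linarith) ?_)
    have := hf0Lip x z
    have h2 : f0 x - f0 z ≤ (G.dist x z : ℝ) := (le_abs_self _).trans this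
    rw [hf0x] at h2
    linarith
  -- truncate
  obtain ⟨g, hgLip, hgfin, hgS⟩ := G.exists_truncation hconn y g0 hg0Lip hg0y
    (insert x (insert y (G.nbr x ∪ G.nbr y)))
  have hxS : x ∈ insert x (insert y (G.nbr x ∪ G.nbr y)) := Finset.mem_insert_self _ _
  have hyS : y ∈ insert x (insert y (G.nbr x ∪ G.nbr y)) :=
    Finset.mem_insert_of_mem (Finset.mem_insert_self _ _)
  have hgx : g x = d := by rw [hgS x hxS, hg0x]
  have hgy : g y = 0 := by rw [hgS y hyS, hg0y]
  have hlapx : G.lap g x = G.lap g0 x := by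
    refine G.lap_congr _ _ x (hgS x hxS) fun z hz => ?_
    exact hgS z (Finset.mem_insert_of_mem (Finset.mem_insert_of_mem
      (Finset.mem_union_left _ hz)))
  have hlapy : G.lap g y = G.lap g0 y := by
    refine G.lap_congr _ _ y (hgS y hyS) fun z hz => ?_
    exact hgS z (Finset.mem_insert_of_mem (Finset.mem_insert_of_mem
      (Finset.mem_union_right _ hz)))
  refine ⟨g, hgLip, hgfin, hgx, hgy, ?_, ?_⟩
  · rw [hlapx]
    refine G.lap_le_lap_add f g0 x t fun z hz => ?_
    have := hlow z
    have h3 : f z - f x = f0 z - f0 x := by simp [hf0]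
    rw [h3, hg0x, hf0x]
    linarith
  · rw [hlapy]
    refine G.lap_le_lap_add g0 f y t fun z hz => ?_
    have := hhigh z
    have h3 : f z - f y = f0 z := by simp [hf0]
    rw [hg0y]
    linarith

end WeightedGraph

/-! ### The curvature set -/

section Main

open WeightedGraph

variable {V : Type} [DecidableEq V] (G : WeightedGraph V)

/-- The set over which the infimum defining the curvature is taken. -/
def curvSet (x y : V) : Set ℝ :=
  { c | ∃ f : V → ℝ, G.Lip1 f ∧ (Function.support f).Finite ∧
    (f y - f x) / (G.dist x y : ℝ) = 1 ∧
    c = (G.lap f x - G.lap f y) / (G.dist x y : ℝ) }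

lemma curvSet_nonempty (hconn : G.toSimple.Connected) (x y : V) (hxy : x ≠ y) :
    (curvSet G x y).Nonempty := by
  have hd : (0 : ℝ) < (G.dist x y : ℝ) := by
    exact_mod_cast hconn.pos_dist_of_ne hxy
  obtain ⟨g, hgLip, hgfin, hgx, hgy, -, -⟩ :=
    G.key_modify hconn x y hxy (fun _ => 0) (G.lip1_const 0)
  refine ⟨(G.lap (fun z => -g z) x - G.lap (fun z => -g z) y) / (G.dist x y : ℝ),
    fun z => -g z, G.lip1_neg hgLip, ?_, ?_, rfl⟩
  · refine Set.Finite.subset hgfin ?_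
    intro z hz
    simp only [Function.mem_support] at hz ⊢
    simpa using hz
  · show (-g y - -g x) / (G.dist x y : ℝ) = 1
    rw [hgy, hgx]
    simp only [neg_zero, zero_sub, neg_neg]
    exact div_self hd.ne'

lemma curvSet_bddBelow (hconn : G.toSimple.Connected) (x y : V) (hxy : x ≠ y) :
    BddBelow (curvSet G x y) := by
  have hd : (0 : ℝ) < (G.dist x y : ℝ) := by
    exact_mod_cast hconn.pos_dist_of_ne hxy
  refine ⟨-((G.degS x + G.degS y) / (G.dist x y : ℝ)), ?_⟩
  rintro c ⟨f, hfLip, -, -, rfl⟩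
  have h1 := G.abs_lap_le_of_lip1 hfLip x
  have h2 := G.abs_lap_le_of_lip1 hfLip y
  obtain ⟨h1a, h1b⟩ := abs_le.mp h1
  obtain ⟨h2a, h2b⟩ := abs_le.mp h2
  have hnum : -(G.degS x + G.degS y) ≤ G.lap f x - G.lap f y := by linarith
  rw [← neg_div]
  gcongr

lemma wass_eq_of_small (hconn : G.toSimple.Connected) (x y : V) (hxy : x ≠ y)
    (ε : ℝ) (hε : 0 < ε) (hε2 : ε * (G.degS x + G.degS y) ≤ 1) :
    Wass G (ollMeas G ε x) (ollMeas G ε y)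
      = (G.dist x y : ℝ) - ε * (G.dist x y : ℝ) * sInf (curvSet G x y) := by
  classical
  have hd : (0 : ℝ) < (G.dist x y : ℝ) := by
    exact_mod_cast hconn.pos_dist_of_ne hxy
  have hd0 : (G.dist x y : ℝ) ≠ 0 := hd.ne'
  have hAne := curvSet_nonempty G hconn x y hxy
  have hAbdd := curvSet_bddBelow G hconn x y hxy
  set B : Set ℝ := { c | ∃ f : V → ℝ, G.Lip1 f ∧ (∃ C, ∀ x, |f x| ≤ C) ∧
    c = ∑' z, f z * (ollMeas G ε x z - ollMeas G ε y z) } with hBdef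
  have hWass : Wass G (ollMeas G ε x) (ollMeas G ε y) = sSup B := rfl
  -- upper bound on B
  have hupper : ∀ b ∈ B, b ≤ (G.dist x y : ℝ)
      - ε * (G.dist x y : ℝ) * sInf (curvSet G x y) := by
    rintro b ⟨f, hfLip, hfBdd, rfl⟩
    rw [tsum_wass_eq]
    obtain ⟨g, hgLip, hgfin, hgx, hgy, hlx, hly⟩ := G.key_modify hconn x y hxy f hfLip
    have ht : 0 ≤ (G.dist x y : ℝ) - (f x - f y) := by
      have h0 := hfLip x y
      have h1 : f x - f y ≤ (G.dist x y : ℝ) := (le_abs_self _).trans h0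
      linarith
    have hmem : (G.lap (fun z => -g z) x - G.lap (fun z => -g z) y) / (G.dist x y : ℝ)
        ∈ curvSet G x y := by
      refine ⟨fun z => -g z, G.lip1_neg hgLip, ?_, ?_, rfl⟩
      · refine Set.Finite.subset hgfin ?_
        intro z hz
        simp only [Function.mem_support] at hz ⊢
        simpa using hz
      · show (-g y - -g x) / (G.dist x y : ℝ) = 1
        rw [hgy, hgx]
        simp only [neg_zero, zero_sub, neg_neg]
        exact div_self hd0
    have hKle := csInf_le hAbdd hmem
    rw [G.lap_neg, G.lap_neg] at hKle
    have heq9 : -G.lap g x - -G.lap g y = G.lap g y - G.lap g x := by ring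
    rw [heq9] at hKle
    have hKle' : sInf (curvSet G x y) * (G.dist x y : ℝ) ≤ G.lap g y - G.lap g x :=
      (le_div_iff₀ hd).mp hKle
    have e2 := mul_le_mul_of_nonneg_left hlx hε.le
    have e3 := mul_le_mul_of_nonneg_left hly hε.le
    have e4 := mul_le_mul_of_nonneg_left hKle' hε.le
    have e5 : ((G.dist x y : ℝ) - (f x - f y)) * (ε * (G.degS x + G.degS y))
        ≤ ((G.dist x y : ℝ) - (f x - f y)) * 1 := mul_le_mul_of_nonneg_left hε2 ht
    nlinarith [e2, e3, e4, e5]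
  have hBne : (0:ℝ) ∈ B := by
    refine ⟨fun _ => 0, G.lip1_const 0, ⟨0, fun z => by simp⟩, ?_⟩
    simp
  have hBbdd : BddAbove B :=
    ⟨(G.dist x y : ℝ) - ε * (G.dist x y : ℝ) * sInf (curvSet G x y), hupper⟩
  -- lower bound
  have hlower : ∀ c ∈ curvSet G x y,
      ((G.dist x y : ℝ) - ε * (G.dist x y : ℝ) * c) ∈ B := by
    rintro c ⟨h, hhLip, hhfin, hhdiv, rfl⟩
    have hhd : h y - h x = (G.dist x y : ℝ) := by
      field_simp at hhdiv
      linarith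
    refine ⟨fun z => -h z, G.lip1_neg hhLip, ?_, ?_⟩
    · obtain ⟨C, hC⟩ := WeightedGraph.bounded_of_finite_support hhfin
      exact ⟨C, fun z => by simpa using hC z⟩
    · have key := tsum_wass_eq G ε x y (fun z => -h z)
      simp only [G.lap_neg] at key
      rw [key]
      show _ = (-h x - -h y) + ε * (-G.lap h x - -G.lap h y)
      have h7 : -h x - -h y = (G.dist x y : ℝ) := by linarith
      rw [h7]
      field_simp
      ring
  rw [hWass]
  refine le_antisymm (csSup_le ⟨0, hBne⟩ hupper) ?_
  have h2 : ∀ c ∈ curvSet G x y,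
      ((G.dist x y : ℝ) - sSup B) / (ε * (G.dist x y : ℝ)) ≤ c := by
    intro c hc
    have hle := le_csSup hBbdd (hlower c hc)
    rw [div_le_iff₀ (by positivity)]
    nlinarith [hle]
  have h3 := le_csInf hAne h2
  rw [div_le_iff₀ (by positivity)] at h3
  nlinarith [h3]

end Main

/-- The limit `κ(x,y) = lim_{ε→0⁺} (1/ε)(1 - W(m_x^ε, m_y^ε)/d(x,y))` exists and equals
`inf {∇_{xy} Δ f : f ∈ Lip(1) ∩ C_c(V), ∇_{yx} f = 1}`. -/
theorem stmt0 {V : Type} [Countable V] [DecidableEq V] (G : WeightedGraph V)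
    (hconn : G.toSimple.Connected) (x y : V) (hxy : x ≠ y) :
    Filter.Tendsto
      (fun ε : ℝ =>
        (1 / ε) * (1 - Wass G (ollMeas G ε x) (ollMeas G ε y) / (G.dist x y : ℝ)))
      (nhdsWithin 0 (Set.Ioi 0))
      (nhds (sInf { c | ∃ f : V → ℝ, G.Lip1 f ∧ (Function.support f).Finite ∧
        (f y - f x) / (G.dist x y : ℝ) = 1 ∧
        c = (G.lap f x - G.lap f y) / (G.dist x y : ℝ) })) := by
  have hd : (0 : ℝ) < (G.dist x y : ℝ) := by
    exact_mod_cast hconn.pos_dist_of_ne hxy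
  have hd0 : (G.dist x y : ℝ) ≠ 0 := hd.ne'
  have hDpos : 0 < G.degS x + G.degS y + 1 := by
    have := G.degS_nonneg x
    have := G.degS_nonneg y
    linarith
  set ε₀ : ℝ := 1 / (G.degS x + G.degS y + 1) with hε₀
  have hε₀pos : 0 < ε₀ := by positivity
  have heq : ∀ ε ∈ Set.Ioo (0:ℝ) ε₀,
      (1 / ε) * (1 - Wass G (ollMeas G ε x) (ollMeas G ε y) / (G.dist x y : ℝ))
        = sInf (curvSet G x y) := by
    intro ε hε
    have hεpos : (0:ℝ) < ε := hε.1
    have hε2 : ε * (G.degS x + G.degS y) ≤ 1 := by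
      have h4 : ε * (G.degS x + G.degS y + 1) ≤ ε₀ * (G.degS x + G.degS y + 1) :=
        mul_le_mul_of_nonneg_right hε.2.le hDpos.le
      rw [hε₀, one_div, inv_mul_cancel₀ hDpos.ne'] at h4
      nlinarith [hεpos]
    rw [wass_eq_of_small G hconn x y hxy ε hεpos hε2]
    field_simp
    ring
  have hconst : Filter.Tendsto (fun _ : ℝ => sInf (curvSet G x y))
      (nhdsWithin 0 (Set.Ioi 0)) (nhds (sInf (curvSet G x y))) := tendsto_const_nhds
  refine Filter.Tendsto.congr' ?_ hconst
  filter_upwards [Ioo_mem_nhdsGT_of_mem (Set.mem_Ico.mpr ⟨le_refl (0:ℝ), hε₀pos⟩)] with ε hε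
  exact (heq ε hε).symm
end

section
/- Let G be a locally finite weighted graph and x ~ y adjacent vertices such that the edge (x,y) is not contained in any cycle of length 3, 4, or 5. Then the Ollivier curvature satisfies κ(x,y) = 2w(x,y)(1/m(x) + 1/m(y)) - Deg(x) - Deg(y), where Deg(x) = (1/m(x)) Σ_z w(x,z). -/
open scoped BigOperators

namespace WeightedGraph

variable {V : Type} (G : WeightedGraph V)

lemma adj_of_w {x z : V} (h : G.w x z ≠ 0) : G.toSimple.Adj x z :=
  ⟨fun e => h (e ▸ G.loopless x), h⟩

lemma walk_lip {f : V → ℝ} (hf : ∀ u v, G.toSimple.Adj u v → |f u - f v| ≤ 1) :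
    ∀ {u v : V} (p : G.toSimple.Walk u v), |f u - f v| ≤ (p.length : ℝ) := by
  intro u v p
  induction p with
  | nil => simp
  | cons h p ih =>
    rename_i a b c
    calc |f a - f c| ≤ |f a - f b| + |f b - f c| := abs_sub_le _ _ _
    _ ≤ 1 + p.length := add_le_add (hf _ _ h) ih
    _ = ((p.length + 1 : ℕ) : ℝ) := by push_cast; ring
    _ = _ := by simp [SimpleGraph.Walk.length_cons]

lemma lip_of_edge (hconn : G.toSimple.Connected) {f : V → ℝ}
    (hf : ∀ u v, G.toSimple.Adj u v → |f u - f v| ≤ 1) : G.Lip1 f := by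
  intro u v
  obtain ⟨p, hp⟩ := (hconn u v).exists_walk_length_eq_dist
  calc |f u - f v| ≤ (p.length : ℝ) := G.walk_lip hf p
  _ = _ := by rw [hp]; rfl

lemma ball_finite (hconn : G.toSimple.Connected) (y : V) :
    ∀ n : ℕ, {z | G.toSimple.dist y z ≤ n}.Finite := by
  intro n
  induction n with
  | zero =>
    apply Set.Finite.subset (Set.finite_singleton y)
    intro z hz
    simp only [Set.mem_setOf_eq, Nat.le_zero] at hz
    exact ((hconn.dist_eq_zero_iff).mp hz).symm
  | succ n ih =>
    apply Set.Finite.subset (ih.union (ih.biUnion (fun v _ => G.locFin v)))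
    intro z hz
    simp only [Set.mem_setOf_eq] at hz
    rcases Nat.lt_or_ge (G.toSimple.dist y z) (n+1) with h | h
    · exact Or.inl (Nat.lt_succ_iff.mp h)
    · have hd : G.toSimple.dist y z = n + 1 := le_antisymm hz h
      obtain ⟨p, hp⟩ := (hconn y z).exists_walk_length_eq_dist
      rw [hd] at hp
      cases hq' : p.reverse with
      | nil =>
        exfalso
        have := congrArg SimpleGraph.Walk.length hq'
        rw [SimpleGraph.Walk.length_reverse, hp] at this
        simp at this
      | cons hadj q =>
        rename_i v
        right
        refine Set.mem_biUnion (x := v) ?_ ?_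
        · have hlen : q.length = n := by
            have := congrArg SimpleGraph.Walk.length hq'
            rw [SimpleGraph.Walk.length_reverse, hp] at this
            simpa using this.symm
          have : G.toSimple.dist v y ≤ n := hlen ▸ SimpleGraph.dist_le q
          simpa [SimpleGraph.dist_comm] using this
        · have : G.toSimple.Adj v z := hadj.symm
          exact this.2

lemma exists_mid (hconn : G.toSimple.Connected) {a b : V}
    (h : G.toSimple.dist a b = 2) : ∃ c, G.toSimple.Adj a c ∧ G.toSimple.Adj c b := by
  obtain ⟨p, hp⟩ := (hconn a b).exists_walk_length_eq_dist
  rw [h] at hp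
  cases p with
  | nil => simp at hp
  | cons h1 q =>
    cases q with
    | nil => simp at hp
    | cons h2 r =>
      have : r.length = 0 := by
        simp only [SimpleGraph.Walk.length_cons] at hp; omega
      have he := SimpleGraph.Walk.eq_of_length_eq_zero this
      rename_i c d
      exact ⟨c, h1, he ▸ h2⟩

lemma sum_split [DecidableEq V] {s : Finset V} {a : V} (ha : a ∈ s) (g : V → ℝ) :
    ∑ z ∈ s, (if z = a then g a else -(g z)) = 2 * g a - ∑ z ∈ s, g z := by
  have h1 : ∑ z ∈ s, (if z = a then g a else -(g z))
      = ∑ z ∈ s, ((if z = a then 2 * g a else 0) - g z) :=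
    Finset.sum_congr rfl (fun z _ => by by_cases hz : z = a <;> simp [hz] <;> ring)
  rw [h1, Finset.sum_sub_distrib, Finset.sum_ite_eq' s a (fun _ => 2 * g a), if_pos ha]

lemma sum_split' [DecidableEq V] {s : Finset V} {a : V} (ha : a ∈ s) (g : V → ℝ) :
    ∑ z ∈ s, (if z = a then -(g a) else g z) = (∑ z ∈ s, g z) - 2 * g a := by
  have h1 : ∀ z ∈ s, (if z = a then -(g a) else g z) = -(if z = a then g a else -(g z)) :=
    fun z _ => by by_cases hz : z = a <;> simp [hz]
  rw [Finset.sum_congr rfl h1, Finset.sum_neg_distrib, sum_split ha g]; ring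

end WeightedGraph

/-- If the edge `(x,y)` is contained in no 3-, 4- or 5-cycle, then
`κ(x,y) = 2 w(x,y)(1/m(x) + 1/m(y)) - Deg(x) - Deg(y)`. -/
theorem stmt2 {V : Type} [Countable V] (G : WeightedGraph V)
    (hconn : G.toSimple.Connected) (x y : V) (hadj : G.toSimple.Adj x y)
    (h3 : ¬ ∃ z, z ≠ x ∧ z ≠ y ∧ G.toSimple.Adj x z ∧ G.toSimple.Adj z y)
    (h4 : ¬ ∃ z₁ z₂, z₁ ≠ x ∧ z₁ ≠ y ∧ z₂ ≠ x ∧ z₂ ≠ y ∧ z₁ ≠ z₂ ∧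
      G.toSimple.Adj x z₁ ∧ G.toSimple.Adj z₁ z₂ ∧ G.toSimple.Adj z₂ y)
    (h5 : ¬ ∃ z₁ z₂ z₃, z₁ ≠ x ∧ z₁ ≠ y ∧ z₂ ≠ x ∧ z₂ ≠ y ∧ z₃ ≠ x ∧ z₃ ≠ y ∧
      z₁ ≠ z₂ ∧ z₁ ≠ z₃ ∧ z₂ ≠ z₃ ∧
      G.toSimple.Adj x z₁ ∧ G.toSimple.Adj z₁ z₂ ∧ G.toSimple.Adj z₂ z₃ ∧
      G.toSimple.Adj z₃ y) :
    G.curv x y = 2 * G.w x y * (1 / G.m x + 1 / G.m y) - G.deg x - G.deg y := by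
  classical
  have hxy : x ≠ y := hadj.1
  have hwxy : G.w x y ≠ 0 := hadj.2
  have hwyx : G.w y x ≠ 0 := by rw [G.symm]; exact hwxy
  have hd1 : G.toSimple.dist x y = 1 := SimpleGraph.dist_eq_one_iff_adj.mpr hadj
  have hdist : (G.dist x y : ℝ) = 1 := by simp [WeightedGraph.dist, hd1]
  set Nx := (G.locFin x).toFinset with hNxdef
  set Ny := (G.locFin y).toFinset with hNydef
  have hmemNx : ∀ z, z ∈ Nx ↔ G.w x z ≠ 0 := fun z => (G.locFin x).mem_toFinset
  have hmemNy : ∀ z, z ∈ Ny ↔ G.w y z ≠ 0 := fun z => (G.locFin y).mem_toFinset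
  have hyNx : y ∈ Nx := (hmemNx y).mpr hwxy
  have hxNy : x ∈ Ny := (hmemNy x).mpr hwyx
  set Sx := ∑ z ∈ Nx, G.w x z with hSxdef
  set Sy := ∑ z ∈ Ny, G.w y z with hSydef
  have hsumx : ∀ g : V → ℝ, (∑ᶠ z, G.w x z * g z) = ∑ z ∈ Nx, G.w x z * g z := by
    intro g
    refine finsum_eq_sum_of_support_subset _ ?_
    intro z hz
    have : G.w x z ≠ 0 := fun h => by simp [Function.mem_support, h] at hz
    simpa using (hmemNx z).mpr this
  have hsumy : ∀ g : V → ℝ, (∑ᶠ z, G.w y z * g z) = ∑ z ∈ Ny, G.w y z * g z := by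
    intro g
    refine finsum_eq_sum_of_support_subset _ ?_
    intro z hz
    have : G.w y z ≠ 0 := fun h => by simp [Function.mem_support, h] at hz
    simpa using (hmemNy z).mpr this
  have hSx : G.deg x = Sx / G.m x := by
    rw [WeightedGraph.deg, hSxdef]
    congr 1
    refine finsum_eq_sum_of_support_subset _ ?_
    intro z hz
    simpa using (hmemNx z).mpr hz
  have hSy : G.deg y = Sy / G.m y := by
    rw [WeightedGraph.deg, hSydef]
    congr 1
    refine finsum_eq_sum_of_support_subset _ ?_
    intro z hz
    simpa using (hmemNy z).mpr hz
  set T := 2 * G.w x y * (1 / G.m x + 1 / G.m y) - G.deg x - G.deg y with hTdef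
  have hTeq : (2 * G.w x y - Sx) / G.m x - (Sy - 2 * G.w y x) / G.m y = T := by
    rw [hTdef, hSx, hSy, G.symm y x]
    have h1 : G.m x ≠ 0 := (G.mpos x).ne'
    have h2 : G.m y ≠ 0 := (G.mpos y).ne'
    field_simp
    ring
  set S := { c | ∃ f : V → ℝ, G.Lip1 f ∧ (Function.support f).Finite ∧
    f y - f x = (G.dist x y : ℝ) ∧ c = (G.lap f x - G.lap f y) / (G.dist x y : ℝ) } with hSdef
  -- lower bound
  have key : ∀ c ∈ S, T ≤ c := by
    rintro c ⟨f, hlip, -, hfyx, rfl⟩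
    rw [hdist] at hfyx ⊢
    rw [div_one]
    have hA : (2 * G.w x y - Sx) / G.m x ≤ G.lap f x := by
      rw [WeightedGraph.lap,
        show (∑ᶠ z, G.w x z * (f z - f x)) = ∑ z ∈ Nx, G.w x z * (f z - f x) from hsumx _]
      have hbound : ∑ z ∈ Nx, (if z = y then G.w x y else -(G.w x z))
          ≤ ∑ z ∈ Nx, G.w x z * (f z - f x) := by
        apply Finset.sum_le_sum
        intro z hz
        by_cases hzy : z = y
        · subst hzy; rw [if_pos rfl, hfyx, mul_one]
        · rw [if_neg hzy]
          have hadjz : G.toSimple.Adj x z := G.adj_of_w ((hmemNx z).mp hz)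
          have hdz : (G.dist x z : ℝ) = 1 := by
            simp [WeightedGraph.dist, SimpleGraph.dist_eq_one_iff_adj.mpr hadjz]
          have hl := hlip x z
          rw [hdz] at hl
          have h1 : -1 ≤ f z - f x := by
            have := abs_le.mp hl
            linarith [this.1]
          nlinarith [G.nonneg x z]
      rw [WeightedGraph.sum_split hyNx (G.w x)] at hbound
      gcongr
      exact (G.mpos x).le
    have hB : G.lap f y ≤ (Sy - 2 * G.w y x) / G.m y := by
      rw [WeightedGraph.lap,
        show (∑ᶠ z, G.w y z * (f z - f y)) = ∑ z ∈ Ny, G.w y z * (f z - f y) from hsumy _]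
      have hbound : ∑ z ∈ Ny, G.w y z * (f z - f y)
          ≤ ∑ z ∈ Ny, (if z = x then -(G.w y x) else G.w y z) := by
        apply Finset.sum_le_sum
        intro z hz
        by_cases hzx : z = x
        · rw [if_pos hzx, hzx]
          have hfx1 : f x - f y = -1 := by linarith
          rw [hfx1, mul_neg_one]
        · rw [if_neg hzx]
          have hadjz : G.toSimple.Adj y z := G.adj_of_w ((hmemNy z).mp hz)
          have hdz : (G.dist y z : ℝ) = 1 := by
            simp [WeightedGraph.dist, SimpleGraph.dist_eq_one_iff_adj.mpr hadjz]
          have hl := hlip y z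
          rw [hdz] at hl
          have h1 : f z - f y ≤ 1 := by
            have := abs_le.mp hl
            linarith [this.1]
          nlinarith [G.nonneg y z]
      rw [WeightedGraph.sum_split' hxNy (G.w y)] at hbound
      gcongr
      exact (G.mpos y).le
    rw [← hTeq]
    exact sub_le_sub hA hB
  -- the witness function
  set f : V → ℝ := fun z =>
    if z = x then (0:ℝ) else if z = y then 1 else if G.toSimple.Adj x z then -1
    else ((3 - G.toSimple.dist y z : ℕ) : ℝ) with hfdef
  have hfx : f x = 0 := by rw [hfdef]; simp
  have hfy : f y = 1 := by rw [hfdef]; simp [Ne.symm hxy]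
  have hfC : ∀ z, z ≠ x → z ≠ y → G.toSimple.Adj x z → f z = -1 := by
    intro z hzx hzy ha
    rw [hfdef]; simp only [if_neg hzx, if_neg hzy, if_pos ha]
  have hfD : ∀ z, z ≠ x → z ≠ y → ¬G.toSimple.Adj x z →
      f z = ((3 - G.toSimple.dist y z : ℕ) : ℝ) := by
    intro z hzx hzy ha
    rw [hfdef]; simp only [if_neg hzx, if_neg hzy, if_neg ha]
  have hfvlb : ∀ z, -1 ≤ f z := by
    intro z
    simp only [hfdef]
    split_ifs
    · norm_num
    · norm_num
    · norm_num
    · exact le_trans (by norm_num) (Nat.cast_nonneg _)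
  -- edge Lipschitz bound
  have hedge : ∀ u v, G.toSimple.Adj u v → f u - f v ≤ 1 := by
    intro u v huv
    by_cases hux : u = x
    · subst hux; rw [hfx]; linarith [hfvlb v]
    by_cases huy : u = y
    · rw [huy, hfy]
      have huv' : G.toSimple.Adj y v := huy ▸ huv
      have hvy : v ≠ y := huv'.ne'
      by_cases hvx : v = x
      · rw [hvx, hfx]; norm_num
      · by_cases hax : G.toSimple.Adj x v
        · exact absurd ⟨v, hvx, hvy, hax, huv'.symm⟩ h3
        · rw [hfD v hvx hvy hax]
          have : (0:ℝ) ≤ ((3 - G.toSimple.dist y v : ℕ) : ℝ) := Nat.cast_nonneg _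
          linarith
    by_cases hxu : G.toSimple.Adj x u
    · rw [hfC u hux huy hxu]; linarith [hfvlb v]
    · rw [hfD u hux huy hxu]
      have hdpos : 0 < G.toSimple.dist y u := hconn.pos_dist_of_ne (Ne.symm huy)
      rcases Nat.lt_or_ge (G.toSimple.dist y u) 3 with hlt | hge
      · have hvx : v ≠ x := by rintro rfl; exact hxu huv.symm
        rcases (by omega : G.toSimple.dist y u = 1 ∨ G.toSimple.dist y u = 2) with hd | hd
        · -- distance 1 from y : f u = 2, need f v ≥ 1
          have hyu : G.toSimple.Adj y u := SimpleGraph.dist_eq_one_iff_adj.mp hd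
          rw [hd]
          norm_num
          by_cases hvy : v = y
          · subst hvy; rw [hfy]; norm_num
          · by_cases hax : G.toSimple.Adj x v
            · exact absurd ⟨v, u, hvx, hvy, hux, huy, huv.ne', hax, huv.symm, hyu.symm⟩ h4
            · rw [hfD v hvx hvy hax]
              have hdv : G.toSimple.dist y v ≤ 2 := by
                have ht := hconn.dist_triangle (u := y) (v := u) (w := v)
                have h1uv : G.toSimple.dist u v = 1 := SimpleGraph.dist_eq_one_iff_adj.mpr huv
                omega
              have h1 : (1:ℕ) ≤ 3 - G.toSimple.dist y v := by omega
              have : (1:ℝ) ≤ ((3 - G.toSimple.dist y v : ℕ) : ℝ) := by exact_mod_cast h1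
              linarith
        · -- distance 2 from y : f u = 1, need f v ≥ 0
          rw [hd]
          norm_num
          by_cases hvy : v = y
          · subst hvy; rw [hfy]; norm_num
          · by_cases hax : G.toSimple.Adj x v
            · obtain ⟨wm, hyw, hwu⟩ := G.exists_mid hconn hd
              have hwx : wm ≠ x := by rintro rfl; exact hxu hwu
              have hwy : wm ≠ y := hyw.ne'
              have hvw : v ≠ wm := by
                rintro rfl; exact h3 ⟨v, hvx, hvy, hax, hyw.symm⟩
              have huw : u ≠ wm := Ne.symm hwu.ne
              exact absurd ⟨v, u, wm, hvx, hvy, hux, huy, hwx, hwy, huv.ne', hvw, huw,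
                hax, huv.symm, hwu.symm, hyw.symm⟩ h5
            · rw [hfD v hvx hvy hax]
              have : (0:ℝ) ≤ ((3 - G.toSimple.dist y v : ℕ) : ℝ) := Nat.cast_nonneg _
              linarith
      · have h0 : 3 - G.toSimple.dist y u = 0 := by omega
        rw [h0]
        norm_num
        linarith [hfvlb v]
  have hlipf : G.Lip1 f :=
    G.lip_of_edge hconn (fun u v h => abs_sub_le_iff.mpr ⟨hedge u v h, hedge v u h.symm⟩)
  -- finite support
  have hsupp : (Function.support f).Finite := by
    apply Set.Finite.subset
      (((Set.finite_singleton y).union (G.locFin x)).union (G.ball_finite hconn y 2))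
    intro z hz
    have hz' : f z ≠ 0 := hz
    by_cases hzx : z = x
    · exact absurd (hzx ▸ hfx) hz'
    by_cases hzy : z = y
    · exact Or.inl (Or.inl hzy)
    by_cases hax : G.toSimple.Adj x z
    · exact Or.inl (Or.inr hax.2)
    · right
      rw [hfD z hzx hzy hax] at hz'
      have : 3 - G.toSimple.dist y z ≠ 0 := fun h => hz' (by rw [h]; norm_num)
      have : G.toSimple.dist y z ≤ 2 := by omega
      exact this
  -- value at the witness
  have hlapx : G.lap f x = (2 * G.w x y - Sx) / G.m x := by
    rw [WeightedGraph.lap,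
      show (∑ᶠ z, G.w x z * (f z - f x)) = ∑ z ∈ Nx, G.w x z * (f z - f x) from hsumx _]
    congr 1
    rw [← WeightedGraph.sum_split hyNx (G.w x)]
    apply Finset.sum_congr rfl
    intro z hz
    have hadjz : G.toSimple.Adj x z := G.adj_of_w ((hmemNx z).mp hz)
    have hzx : z ≠ x := hadjz.ne'
    by_cases hzy : z = y
    · subst hzy; rw [if_pos rfl, hfy, hfx]; ring
    · rw [if_neg hzy, hfC z hzx hzy hadjz, hfx]; ring
  have hlapy : G.lap f y = (Sy - 2 * G.w y x) / G.m y := by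
    rw [WeightedGraph.lap,
      show (∑ᶠ z, G.w y z * (f z - f y)) = ∑ z ∈ Ny, G.w y z * (f z - f y) from hsumy _]
    congr 1
    rw [← WeightedGraph.sum_split' hxNy (G.w y)]
    apply Finset.sum_congr rfl
    intro z hz
    have hadjz : G.toSimple.Adj y z := G.adj_of_w ((hmemNy z).mp hz)
    have hzy : z ≠ y := hadjz.ne'
    by_cases hzx : z = x
    · subst hzx; rw [if_pos rfl, hfy, hfx]; ring
    · rw [if_neg hzx]
      have hax : ¬G.toSimple.Adj x z := fun h => h3 ⟨z, hzx, hzy, h, hadjz.symm⟩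
      have hdz : G.toSimple.dist y z = 1 := SimpleGraph.dist_eq_one_iff_adj.mpr hadjz
      rw [hfD z hzx hzy hax, hfy, hdz]
      norm_num
  have hfyx' : f y - f x = (G.dist x y : ℝ) := by rw [hfy, hfx, hdist]; norm_num
  have hmemT : T ∈ S := by
    refine ⟨f, hlipf, hsupp, hfyx', ?_⟩
    rw [hdist, div_one, hlapx, hlapy, hTeq]
  have hcurv : G.curv x y = sInf S := by rw [WeightedGraph.curv, ← hSdef]
  rw [hcurv]
  exact le_antisymm (csInf_le ⟨T, key⟩ hmemT) (le_csInf ⟨T, hmemT⟩ key)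
end

section
/- Let G=(ℕ₀,w,m) be a birth-death chain, i.e., w(m,n)=0 whenever |m-n| ≠ 1, and let f(r)=r. Then for all 0 ≤ r < R, the Ollivier curvature satisfies κ(r,R) = (Δf(r) - Δf(R))/(R - r) = [w(r,r+1) - w(r,r-1)]/[(R-r)m(r)] - [w(R,R+1) - w(R,R-1)]/[(R-r)m(R)], where w(0,-1) := 0. -/
open scoped BigOperators

section Aux
variable (G : WeightedGraph ℕ)

lemma lap_formula
    (hbd : ∀ r s : ℕ, s ≠ r + 1 → r ≠ s + 1 → G.w r s = 0)
    (f : ℕ → ℝ) (x : ℕ) :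
    G.lap f x
      = (G.w x (x-1) * (f (x-1) - f x) + G.w x (x+1) * (f (x+1) - f x)) / G.m x := by
  unfold WeightedGraph.lap
  congr 1
  rw [finsum_eq_sum_of_support_subset _ (s := ({x-1, x+1} : Finset ℕ)) ?_,
    Finset.sum_pair (by omega)]
  intro y hy
  simp only [Function.mem_support] at hy
  have hw : G.w x y ≠ 0 := fun h => hy (by rw [h]; ring)
  simp only [Finset.coe_insert, Finset.coe_singleton, Set.mem_insert_iff,
    Set.mem_singleton_iff]
  by_contra hc
  push_neg at hc
  exact hw (hbd x y (by omega) (by omega))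

lemma lap_id
    (hbd : ∀ r s : ℕ, s ≠ r + 1 → r ≠ s + 1 → G.w r s = 0) (x : ℕ) :
    G.lap (fun n => (n : ℝ)) x = (G.w x (x+1) - G.w x (x-1)) / G.m x := by
  rw [lap_formula G hbd]
  rcases Nat.eq_zero_or_pos x with h | h
  · subst h; simp [G.loopless]
  · have h1 : ((x-1 : ℕ) : ℝ) = (x : ℝ) - 1 := by
      have : (1:ℕ) ≤ x := h
      push_cast [this]; ring
    rw [h1]; push_cast; ring_nf

lemma adj_succ (hpos : ∀ r : ℕ, 0 < G.w r (r + 1)) (n : ℕ) :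
    G.toSimple.Adj n (n+1) := ⟨by omega, (hpos n).ne'⟩

lemma walk_len (hpos : ∀ r : ℕ, 0 < G.w r (r + 1)) :
    ∀ (k x : ℕ), ∃ p : G.toSimple.Walk x (x+k), p.length = k := by
  intro k
  induction k with
  | zero => intro x; exact ⟨SimpleGraph.Walk.nil, rfl⟩
  | succ k ih =>
    intro x
    obtain ⟨p, hp⟩ := ih (x+1)
    refine ⟨SimpleGraph.Walk.cons (adj_succ G hpos x)
      (p.copy rfl (by omega)), ?_⟩
    simp [hp]

lemma walk_ge (hbd : ∀ r s : ℕ, s ≠ r + 1 → r ≠ s + 1 → G.w r s = 0)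
    {x y : ℕ} (p : G.toSimple.Walk x y) : Nat.dist x y ≤ p.length := by
  induction p with
  | nil => simp [Nat.dist_self]
  | @cons u v w h p ih =>
    have hw : G.w u v ≠ 0 := h.2
    have : v = u + 1 ∨ u = v + 1 := by
      by_contra hc; push_neg at hc
      exact hw (hbd u v hc.1 hc.2)
    simp only [Nat.dist] at *
    simp only [SimpleGraph.Walk.length_cons]
    omega

lemma dist_eq (hbd : ∀ r s : ℕ, s ≠ r + 1 → r ≠ s + 1 → G.w r s = 0)
    (hpos : ∀ r : ℕ, 0 < G.w r (r + 1)) (x y : ℕ) :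
    G.dist x y = Nat.dist x y := by
  have hle : ∀ a b : ℕ, a ≤ b → G.toSimple.dist a b ≤ b - a := by
    intro a b hab
    obtain ⟨p, hp⟩ := walk_len G hpos (b - a) a
    have hb : a + (b - a) = b := by omega
    calc G.toSimple.dist a b = G.toSimple.dist a (a + (b-a)) := by rw [hb]
      _ ≤ p.length := SimpleGraph.dist_le p
      _ = b - a := hp
  have hreach : G.toSimple.Reachable x y := by
    rcases le_total x y with h | h
    · obtain ⟨p, _⟩ := walk_len G hpos (y - x) x
      have hb : x + (y - x) = y := by omega
      exact ⟨hb ▸ p⟩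
    · obtain ⟨p, _⟩ := walk_len G hpos (x - y) y
      have hb : y + (x - y) = x := by omega
      exact ⟨(hb ▸ p).reverse⟩
  unfold WeightedGraph.dist
  apply le_antisymm
  · rcases le_total x y with h | h
    · have h1 := hle x y h
      simp only [Nat.dist]
      omega
    · have h1 := hle y x h
      have h2 := SimpleGraph.dist_comm (G := G.toSimple) (u := x) (v := y)
      simp only [Nat.dist]
      omega
  · obtain ⟨p, hp⟩ := hreach.exists_walk_length_eq_dist
    have := walk_ge G hbd p
    omega

lemma natdist_cast (x y : ℕ) : (Nat.dist x y : ℝ) = |(x:ℝ) - (y:ℝ)| := by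
  rcases le_total x y with h | h
  · have h1 : Nat.dist x y = y - x := by simp only [Nat.dist]; omega
    rw [h1, abs_sub_comm, abs_of_nonneg (sub_nonneg.mpr (Nat.cast_le.mpr h))]
    push_cast [h]; ring
  · have h1 : Nat.dist x y = x - y := by simp only [Nat.dist]; omega
    rw [h1, abs_of_nonneg (sub_nonneg.mpr (Nat.cast_le.mpr h))]
    push_cast [h]; ring

end Aux



/-- The Ollivier curvature of a birth-death chain:
`κ(r,R) = (Δf(r) - Δf(R))/(R-r)` for `f(n) = n`, with the explicit formula in terms of the
edge weights (where `w(0,-1) := 0`, realized by `w 0 0 = 0` via truncated subtraction). -/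
theorem stmt3 (G : WeightedGraph ℕ)
    (hbd : ∀ r s : ℕ, s ≠ r + 1 → r ≠ s + 1 → G.w r s = 0)
    (hpos : ∀ r : ℕ, 0 < G.w r (r + 1))
    (r R : ℕ) (hrR : r < R) :
    G.curv r R =
      (G.lap (fun n => (n : ℝ)) r - G.lap (fun n => (n : ℝ)) R) / ((R : ℝ) - (r : ℝ)) ∧
    G.curv r R =
      (G.w r (r + 1) - G.w r (r - 1)) / (((R : ℝ) - (r : ℝ)) * G.m r)
        - (G.w R (R + 1) - G.w R (R - 1)) / (((R : ℝ) - (r : ℝ)) * G.m R) := by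
  have hmr : G.m r ≠ 0 := (G.mpos r).ne'
  have hmR : G.m R ≠ 0 := (G.mpos R).ne'
  have hRr : (0:ℝ) < (R:ℝ) - r := sub_pos.mpr (Nat.cast_lt.mpr hrR)
  have hr1R : (r:ℝ) + 1 ≤ (R:ℝ) := by exact_mod_cast hrR
  have hd : ∀ x y : ℕ, (G.dist x y : ℝ) = |(x:ℝ) - (y:ℝ)| := fun x y => by
    rw [dist_eq G hbd hpos, natdist_cast]
  have hdRr : (G.dist r R : ℝ) = (R:ℝ) - r := by
    rw [hd, abs_sub_comm, abs_of_nonneg (by linarith)]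
  have key : ∀ x y : ℕ, ∀ g : ℕ → ℝ, G.Lip1 g → |g x - g y| ≤ |(x:ℝ) - (y:ℝ)| := by
    intro x y g hg
    have := hg x y
    rwa [hd] at this
  have hR1 : ((R-1:ℕ):ℝ) = (R:ℝ) - 1 := by
    have h1 : (1:ℕ) ≤ R := by omega
    push_cast [h1]; ring
  have hcast1 : ∀ x : ℕ, ((x+1:ℕ):ℝ) = (x:ℝ) + 1 := by intro x; push_cast; ring
  have hinf : G.curv r R =
      (G.lap (fun n => (n : ℝ)) r - G.lap (fun n => (n : ℝ)) R) / ((R : ℝ) - (r : ℝ)) := by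
    set K := R + 2 with hK
    set f : ℕ → ℝ := fun n => ((min n K : ℕ) : ℝ) - ((K : ℕ) : ℝ) with hf
    have hfval : ∀ n : ℕ, n ≤ K → f n = (n:ℝ) - ((K:ℕ):ℝ) := by
      intro n hn; simp only [hf]; rw [min_eq_left hn]
    have hLipf : G.Lip1 f := by
      intro x y
      have h1 : f x - f y = ((min x K : ℕ) : ℝ) - ((min y K : ℕ) : ℝ) := by
        simp only [hf]; ring
      rw [h1, hd, ← natdist_cast, ← natdist_cast]
      exact Nat.cast_le.mpr (by simp only [Nat.dist]; omega)
    have hsupp : (Function.support f).Finite := by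
      apply Set.Finite.subset (Set.finite_Iio K)
      intro n hn
      simp only [Function.mem_support] at hn
      simp only [Set.mem_Iio]
      by_contra hc
      push_neg at hc
      exact hn (by simp only [hf]; rw [min_eq_right hc]; ring)
    have hgapf : f R - f r = (G.dist r R : ℝ) := by
      rw [hdRr, hfval R (by omega), hfval r (by omega)]; ring
    have hlapf : ∀ x : ℕ, x + 1 ≤ K → G.lap f x = G.lap (fun n => (n:ℝ)) x := by
      intro x hx
      rw [lap_formula G hbd, lap_formula G hbd,
        hfval (x-1) (by omega), hfval x (by omega), hfval (x+1) (by omega)]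
      ring_nf
    unfold WeightedGraph.curv
    apply IsLeast.csInf_eq
    constructor
    · exact ⟨f, hLipf, hsupp, hgapf, by rw [hdRr, hlapf r (by omega), hlapf R (by omega)]⟩
    · rintro c ⟨g, hLip, hfin, hgap, rfl⟩
      rw [hdRr] at hgap ⊢
      have e1 : g (r+1) - g r = 1 := by
        have a := key (r+1) r g hLip
        have b := key R (r+1) g hLip
        rw [hcast1 r] at a b
        rw [show (r:ℝ) + 1 - r = 1 by ring, abs_one] at a
        rw [abs_of_nonneg (by linarith : (0:ℝ) ≤ (R:ℝ) - ((r:ℝ)+1))] at b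
        have a1 := abs_le.mp a
        have b1 := abs_le.mp b
        linarith [a1.1, a1.2, b1.1, b1.2]
      have e2 : g R - g (R-1) = 1 := by
        have a := key R (R-1) g hLip
        have b := key (R-1) r g hLip
        rw [hR1] at a b
        rw [show (R:ℝ) - ((R:ℝ)-1) = 1 by ring, abs_one] at a
        rw [abs_of_nonneg (by linarith : (0:ℝ) ≤ (R:ℝ) - 1 - r)] at b
        have a1 := abs_le.mp a
        have b1 := abs_le.mp b
        linarith [a1.1, a1.2, b1.1, b1.2]
      have e4 : g (R+1) - g R ≤ 1 := by
        have a := key (R+1) R g hLip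
        rw [hcast1 R] at a
        rw [show (R:ℝ) + 1 - R = 1 by ring, abs_one] at a
        exact (abs_le.mp a).2
      have hA : G.lap (fun n => (n:ℝ)) r ≤ G.lap g r := by
        rw [lap_formula G hbd, lap_formula G hbd]
        apply div_le_div_of_nonneg_right ?_ (G.mpos r).le
        beta_reduce
        have m2 : G.w r (r+1) * (((r+1:ℕ):ℝ) - (r:ℝ)) = G.w r (r+1) * (g (r+1) - g r) := by
          rw [hcast1 r, e1]; ring
        rcases Nat.eq_zero_or_pos r with h0 | h0
        · subst h0
          have hz : G.w 0 (0-1) = 0 := by simpa using G.loopless 0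
          rw [hz]
          simp only [zero_mul, zero_add]
          linarith [m2]
        · have hr1 : ((r-1:ℕ):ℝ) = (r:ℝ) - 1 := by push_cast [h0]; ring
          have e3 : -1 ≤ g (r-1) - g r := by
            have a := key (r-1) r g hLip
            rw [hr1, show (r:ℝ) - 1 - r = -1 by ring, abs_neg, abs_one] at a
            exact (abs_le.mp a).1
          have m1 : G.w r (r-1) * (((r-1:ℕ):ℝ) - (r:ℝ)) ≤ G.w r (r-1) * (g (r-1) - g r) := by
            rw [hr1, show (r:ℝ) - 1 - r = -1 by ring]
            exact mul_le_mul_of_nonneg_left e3 (G.nonneg r (r-1))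
          linarith [m1, m2]
      have hB : G.lap g R ≤ G.lap (fun n => (n:ℝ)) R := by
        rw [lap_formula G hbd, lap_formula G hbd]
        apply div_le_div_of_nonneg_right ?_ (G.mpos R).le
        beta_reduce
        have m1 : G.w R (R-1) * (g (R-1) - g R) = G.w R (R-1) * (((R-1:ℕ):ℝ) - (R:ℝ)) := by
          rw [hR1, show g (R-1) - g R = -1 by linarith [e2]]; ring
        have m2 : G.w R (R+1) * (g (R+1) - g R) ≤ G.w R (R+1) * (((R+1:ℕ):ℝ) - (R:ℝ)) := by
          rw [hcast1 R, show (R:ℝ) + 1 - R = 1 by ring]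
          exact mul_le_mul_of_nonneg_left e4 (G.nonneg R (R+1))
        linarith [m1, m2]
      apply div_le_div_of_nonneg_right ?_ hRr.le
      linarith [hA, hB]
  refine ⟨hinf, ?_⟩
  rw [hinf, lap_id G hbd, lap_id G hbd]
  have h3 : (R:ℝ) - (r:ℝ) ≠ 0 := hRr.ne'
  field_simp
end

section
/- Let G be a combinatorial graph and x₀ ~ y₀ adjacent vertices. Then there exists a function ρ : B_1(x₀) × B_1(y₀) → {0,1} satisfying Σ_{y∈B_1(y₀)} ρ(x,y) = 1 for all x ~ x₀ and Σ_{x∈B_1(x₀)} ρ(x,y) = 1 for all y ~ y₀, with ρ(z,z)=1 for all z ∈ B_1(x₀) ∩ B_1(y₀), such that κ(x₀,y₀) = Σ_{x,y} ρ(x,y)(1 - d(x,y)). -/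
open scoped BigOperators

open Finset


theorem core {V : Type} [DecidableEq V] (d : V → V → ℕ) (x₀ y₀ : V)
    (hself : ∀ a, d a a = 0)
    (hsymm : ∀ a b, d a b = d b a)
    (htri : ∀ a b c, d a c ≤ d a b + d b c)
    (hpos : ∀ a b, a ≠ b → 1 ≤ d a b)
    (Af Bf : Finset V)
    (hxy : d x₀ y₀ = 1)
    (hA1 : ∀ u ∈ Af, d x₀ u = 1) (hA2 : ∀ u ∈ Af, d y₀ u = 2)
    (hB1 : ∀ v ∈ Bf, d y₀ v = 1) (hB2 : ∀ v ∈ Bf, d x₀ v = 2) :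
    ∃ (f : V → ℤ) (P : Finset (V × V)),
      f x₀ = 0 ∧ f y₀ = 1 ∧
      (∀ a ∈ insert x₀ (insert y₀ (Af ∪ Bf)), ∀ b ∈ insert x₀ (insert y₀ (Af ∪ Bf)),
          f b - f a ≤ (d a b : ℤ)) ∧
      (∀ p ∈ P, p.1 ∈ Af ∧ p.2 ∈ Bf) ∧
      (∀ p ∈ P, ∀ q ∈ P, p.1 = q.1 → p = q) ∧
      (∀ p ∈ P, ∀ q ∈ P, p.2 = q.2 → p = q) ∧
      ((∑ u ∈ Af, f u) - ∑ v ∈ Bf, f v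
        = -(∑ p ∈ P, (d p.1 p.2 : ℤ)) - ((Af.card : ℤ) - ((P.image Prod.fst).card : ℤ))
          - 2 * ((Bf.card : ℤ) - ((P.image Prod.snd).card : ℤ))) := by
  classical
  set T : Finset V := insert x₀ (insert y₀ (Af ∪ Bf)) with hT
  have hxA : x₀ ∉ Af := fun h => by have := hA1 _ h; rw [hself] at this; omega
  have hyA : y₀ ∉ Af := fun h => by have := hA2 _ h; rw [hself] at this; omega
  have hxB : x₀ ∉ Bf := fun h => by have := hB2 _ h; rw [hself] at this; omega
  have hyB : y₀ ∉ Bf := fun h => by have := hB1 _ h; rw [hself] at this; omega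
  have hAB : ∀ a, a ∈ Af → a ∈ Bf → False := fun a ha hb => by
    have h1 := hA2 a ha; have h2 := hB1 a hb; omega
  have hxT : x₀ ∈ T := by simp [hT]
  have hyT : y₀ ∈ T := by simp [hT]
  have hAT : ∀ u ∈ Af, u ∈ T := fun u hu => by simp [hT, hu]
  have hBT : ∀ v ∈ Bf, v ∈ T := fun v hv => by simp [hT, hv]
  set Feas : (V → ℤ) → Prop := fun f =>
    f x₀ = 0 ∧ f y₀ = 1 ∧ ∀ a ∈ T, ∀ b ∈ T, f b - f a ≤ (d a b : ℤ) with hFeas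
  set obj : (V → ℤ) → ℤ := fun f => (∑ u ∈ Af, f u) - ∑ v ∈ Bf, f v with hobj
  have hxyne : x₀ ≠ y₀ := fun h => by rw [h, hself] at hxy; omega
  -- a feasible function exists
  have hfeas0 : Feas (fun t => if t = y₀ ∨ t ∈ Bf then (1:ℤ) else 0) := by
    refine ⟨by simp [hxyne, hxB], by simp, ?_⟩
    intro a _ b _
    rcases eq_or_ne a b with rfl | hne
    · simp [hself]
    · have h1 : (1:ℤ) ≤ (d a b : ℤ) := by exact_mod_cast hpos a b hne
      simp only []
      by_cases hb : b = y₀ ∨ b ∈ Bf <;> by_cases ha : a = y₀ ∨ a ∈ Bf <;> simp [ha, hb] <;> omega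
  -- bounds for feasible functions
  have hbA : ∀ f, Feas f → ∀ u ∈ Af, -1 ≤ f u ∧ f u ≤ 1 := by
    intro f hf u hu
    have h1 := hf.2.2 u (hAT u hu) x₀ hxT
    have h2 := hf.2.2 x₀ hxT u (hAT u hu)
    rw [hsymm u x₀] at h1
    rw [hA1 u hu] at h1 h2
    have := hf.1
    constructor <;> push_cast at h1 h2 <;> omega
  have hbB : ∀ f, Feas f → ∀ v ∈ Bf, 0 ≤ f v ∧ f v ≤ 2 := by
    intro f hf v hv
    have h1 := hf.2.2 v (hBT v hv) y₀ hyT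
    have h2 := hf.2.2 x₀ hxT v (hBT v hv)
    rw [hsymm v y₀, hB1 v hv] at h1
    rw [hB2 v hv] at h2
    have h3 := hf.1; have h4 := hf.2.1
    constructor <;> push_cast at h1 h2 <;> omega
  -- minimizer
  have hmin : ∃ z : ℤ, (∃ f, Feas f ∧ obj f = z) ∧
      ∀ z' : ℤ, (∃ f, Feas f ∧ obj f = z') → z ≤ z' := by
    have hbdd : ∃ b : ℤ, ∀ z : ℤ, (∃ f, Feas f ∧ obj f = z) → b ≤ z := by
      refine ⟨-(Af.card : ℤ) - 2 * (Bf.card : ℤ), ?_⟩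
      rintro z ⟨f, hf, rfl⟩
      have h1 : -(Af.card : ℤ) ≤ ∑ u ∈ Af, f u := by
        calc -(Af.card : ℤ) = ∑ _u ∈ Af, (-1 : ℤ) := by simp
        _ ≤ ∑ u ∈ Af, f u := Finset.sum_le_sum (fun u hu => (hbA f hf u hu).1)
      have h2 : ∑ v ∈ Bf, f v ≤ 2 * (Bf.card : ℤ) := by
        calc ∑ v ∈ Bf, f v ≤ ∑ _v ∈ Bf, (2:ℤ) :=
          Finset.sum_le_sum (fun v hv => (hbB f hf v hv).2)
        _ = 2 * (Bf.card : ℤ) := by simp [mul_comm]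
      simp only [hobj]; omega
    obtain ⟨lb, ⟨hlb1, hlb2⟩⟩ := Int.exists_least_of_bdd hbdd ⟨obj (fun t => if t = y₀ ∨ t ∈ Bf then (1:ℤ) else 0), ⟨_, hfeas0, rfl⟩⟩
    exact ⟨lb, hlb1, hlb2⟩
  obtain ⟨μ, ⟨f, hf, hfμ⟩, hμmin⟩ := hmin
  set Tight : V → V → Prop := fun a b => f b - f a = (d a b : ℤ) with hTight
  have tight_trans : ∀ a ∈ T, ∀ b ∈ T, ∀ c ∈ T, Tight a b → Tight b c → Tight a c := by
    intro a _ b _ c hc h1 h2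
    have h3 := hf.2.2 a ‹a ∈ T› c hc
    have h4 : (d a c : ℤ) ≤ (d a b : ℤ) + (d b c : ℤ) := by exact_mod_cast htri a b c
    simp only [hTight] at h1 h2 ⊢
    omega
  set U : Finset V := Af.filter (fun u => 0 ≤ f u) with hU
  set W : Finset V := Bf.filter (fun v => f v ≤ 1) with hW
  have hallA : ∀ s : Finset ↥U,
      s.card ≤ (s.biUnion (fun u => Bf.filter (fun b => Tight ↑u b))).card := by
    intro s
    by_contra hcon
    push_neg at hcon
    set X : Finset V := s.image Subtype.val with hX
    set N : Finset V := s.biUnion (fun u => Bf.filter (fun b => Tight ↑u b)) with hN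
    have hXU : ∀ x ∈ X, x ∈ U := by
      intro x hx; simp only [hX, mem_image] at hx; obtain ⟨i, _, rfl⟩ := hx; exact i.2
    have hXA : ∀ x ∈ X, x ∈ Af := fun x hx => (mem_filter.mp (hXU x hx)).1
    have hXcard : X.card = s.card := card_image_of_injective _ Subtype.val_injective
    set S : Finset V := X ∪ T.filter (fun t => ∃ x ∈ X, Tight x t) with hS
    have hST : ∀ a ∈ S, a ∈ T := by
      intro a ha
      rcases mem_union.mp ha with h | h
      · exact hAT _ (hXA _ h)
      · exact (mem_filter.mp h).1
    have hbd : ∀ a ∈ S, ∀ b ∈ T, b ∉ S → ¬ Tight a b := by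
      intro a ha b hb hbS hab
      rcases mem_union.mp ha with h | h
      · exact hbS (mem_union_right _ (mem_filter.mpr ⟨hb, a, h, hab⟩))
      · obtain ⟨-, x, hx, hxa⟩ := mem_filter.mp h
        exact hbS (mem_union_right _ (mem_filter.mpr ⟨hb, x, hx,
          tight_trans x (hAT _ (hXA _ hx)) a (hST a ha) b hb hxa hab⟩))
    have hxS : x₀ ∉ S := by
      intro h
      rcases mem_union.mp h with h | h
      · exact hxA (hXA _ h)
      · obtain ⟨-, x, hx, hxa⟩ := mem_filter.mp h
        have hdx : d x x₀ = 1 := by rw [hsymm]; exact hA1 _ (hXA _ hx)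
        have h0 : (0:ℤ) ≤ f x := (mem_filter.mp (hXU _ hx)).2
        simp only [hTight, hdx, hf.1] at hxa
        omega
    have hyS : y₀ ∉ S := by
      intro h
      rcases mem_union.mp h with h | h
      · exact hyA (hXA _ h)
      · obtain ⟨-, x, hx, hxa⟩ := mem_filter.mp h
        have hdx : d x y₀ = 2 := by rw [hsymm]; exact hA2 _ (hXA _ hx)
        have h0 : (0:ℤ) ≤ f x := (mem_filter.mp (hXU _ hx)).2
        simp only [hTight, hdx, hf.2.1] at hxa
        omega
    set f' : V → ℤ := fun t => if t ∈ S then f t - 1 else f t with hf'def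
    have hf' : Feas f' := by
      refine ⟨by simp only [hf'def, if_neg hxS, hf.1], by simp only [hf'def, if_neg hyS, hf.2.1], ?_⟩
      intro a ha b hb
      have base := hf.2.2 a ha b hb
      by_cases haS : a ∈ S <;> by_cases hbS : b ∈ S
      · simp only [hf'def, if_pos haS, if_pos hbS]; omega
      · have hnt := hbd a haS b hb hbS
        simp only [hTight] at hnt
        simp only [hf'def, if_pos haS, if_neg hbS]; omega
      · simp only [hf'def, if_neg haS, if_pos hbS]; omega
      · simp only [hf'def, if_neg haS, if_neg hbS]; omega
    have key : ∀ C : Finset V, ∑ u ∈ C, f' u = (∑ u ∈ C, f u) - ((C ∩ S).card : ℤ) := by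
      intro C
      have h1 : ∀ u, f' u = f u - (if u ∈ S then (1:ℤ) else 0) := by
        intro u; simp only [hf'def]; split <;> omega
      simp only [h1]
      rw [Finset.sum_sub_distrib]
      congr 1
      rw [← Finset.sum_filter, Finset.sum_const, Finset.filter_mem_eq_inter]
      simp
    have hBS : (Bf ∩ S) ⊆ N := by
      intro b hb
      obtain ⟨hbB, hbS⟩ := mem_inter.mp hb
      rcases mem_union.mp hbS with h | h
      · exact absurd (hXA _ h) (fun hh => hAB b hh hbB)
      · obtain ⟨-, x, hx, hxa⟩ := mem_filter.mp h
        have hx' := hx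
        simp only [hX, mem_image] at hx'
        obtain ⟨i, hi, rfl⟩ := hx'
        exact mem_biUnion.mpr ⟨i, hi, mem_filter.mpr ⟨hbB, hxa⟩⟩
    have hXS : X ⊆ Af ∩ S := fun x hx => mem_inter.mpr ⟨hXA x hx, mem_union_left _ hx⟩
    have hcard1 : s.card ≤ (Af ∩ S).card := hXcard ▸ card_le_card hXS
    have hcard2 : (Bf ∩ S).card ≤ N.card := card_le_card hBS
    have hle := hμmin (obj f') ⟨f', hf', rfl⟩
    have : obj f' = μ - ((Af ∩ S).card : ℤ) + ((Bf ∩ S).card : ℤ) := by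
      simp only [hobj] at hfμ ⊢
      rw [key Af, key Bf]
      omega
    omega
  have hallB : ∀ s : Finset ↥W,
      s.card ≤ (s.biUnion (fun v => Af.filter (fun a => Tight a ↑v))).card := by
    intro s
    by_contra hcon
    push_neg at hcon
    set Y : Finset V := s.image Subtype.val with hY
    set N : Finset V := s.biUnion (fun v => Af.filter (fun a => Tight a ↑v)) with hN
    have hYW : ∀ y ∈ Y, y ∈ W := by
      intro y hy; simp only [hY, mem_image] at hy; obtain ⟨i, _, rfl⟩ := hy; exact i.2
    have hYB : ∀ y ∈ Y, y ∈ Bf := fun y hy => (mem_filter.mp (hYW y hy)).1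
    have hYcard : Y.card = s.card := card_image_of_injective _ Subtype.val_injective
    set S : Finset V := Y ∪ T.filter (fun t => ∃ y ∈ Y, Tight t y) with hS
    have hST : ∀ a ∈ S, a ∈ T := by
      intro a ha
      rcases mem_union.mp ha with h | h
      · exact hBT _ (hYB _ h)
      · exact (mem_filter.mp h).1
    have hbd : ∀ b ∈ S, ∀ a ∈ T, a ∉ S → ¬ Tight a b := by
      intro b hb a ha haS hab
      rcases mem_union.mp hb with h | h
      · exact haS (mem_union_right _ (mem_filter.mpr ⟨ha, b, h, hab⟩))
      · obtain ⟨-, y, hy, hby⟩ := mem_filter.mp h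
        exact haS (mem_union_right _ (mem_filter.mpr ⟨ha, y, hy,
          tight_trans a ha b (hST b hb) y (hBT _ (hYB _ hy)) hab hby⟩))
    have hxS : x₀ ∉ S := by
      intro h
      rcases mem_union.mp h with h | h
      · exact hxB (hYB _ h)
      · obtain ⟨-, y, hy, hxy'⟩ := mem_filter.mp h
        have hdy : d x₀ y = 2 := hB2 _ (hYB _ hy)
        have h0 : f y ≤ 1 := (mem_filter.mp (hYW _ hy)).2
        simp only [hTight, hdy, hf.1] at hxy'
        omega
    have hyS : y₀ ∉ S := by
      intro h
      rcases mem_union.mp h with h | h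
      · exact hyB (hYB _ h)
      · obtain ⟨-, y, hy, hxy'⟩ := mem_filter.mp h
        have hdy : d y₀ y = 1 := hB1 _ (hYB _ hy)
        have h0 : f y ≤ 1 := (mem_filter.mp (hYW _ hy)).2
        simp only [hTight, hdy, hf.2.1] at hxy'
        omega
    set f' : V → ℤ := fun t => if t ∈ S then f t + 1 else f t with hf'def
    have hf' : Feas f' := by
      refine ⟨by simp only [hf'def, if_neg hxS, hf.1], by simp only [hf'def, if_neg hyS, hf.2.1], ?_⟩
      intro a ha b hb
      have base := hf.2.2 a ha b hb
      by_cases haS : a ∈ S <;> by_cases hbS : b ∈ S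
      · simp only [hf'def, if_pos haS, if_pos hbS]; omega
      · simp only [hf'def, if_pos haS, if_neg hbS]; omega
      · have hnt := hbd b hbS a ha haS
        simp only [hTight] at hnt
        simp only [hf'def, if_neg haS, if_pos hbS]; omega
      · simp only [hf'def, if_neg haS, if_neg hbS]; omega
    have key : ∀ C : Finset V, ∑ u ∈ C, f' u = (∑ u ∈ C, f u) + ((C ∩ S).card : ℤ) := by
      intro C
      have h1 : ∀ u, f' u = f u + (if u ∈ S then (1:ℤ) else 0) := by
        intro u; simp only [hf'def]; split <;> omega
      simp only [h1]
      rw [Finset.sum_add_distrib]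
      congr 1
      rw [← Finset.sum_filter, Finset.sum_const, Finset.filter_mem_eq_inter]
      simp
    have hAS : (Af ∩ S) ⊆ N := by
      intro a hai
      obtain ⟨haA, haS⟩ := mem_inter.mp hai
      rcases mem_union.mp haS with h | h
      · exact absurd haA (fun hh => hAB a hh (hYB _ h))
      · obtain ⟨-, y, hy, hay⟩ := mem_filter.mp h
        have hy' := hy
        simp only [hY, mem_image] at hy'
        obtain ⟨i, hi, rfl⟩ := hy'
        exact mem_biUnion.mpr ⟨i, hi, mem_filter.mpr ⟨haA, hay⟩⟩
    have hYS : Y ⊆ Bf ∩ S := fun y hy => mem_inter.mpr ⟨hYB y hy, mem_union_left _ hy⟩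
    have hcard1 : s.card ≤ (Bf ∩ S).card := hYcard ▸ card_le_card hYS
    have hcard2 : (Af ∩ S).card ≤ N.card := card_le_card hAS
    have hle := hμmin (obj f') ⟨f', hf', rfl⟩
    have : obj f' = μ + ((Af ∩ S).card : ℤ) - ((Bf ∩ S).card : ℤ) := by
      simp only [hobj] at hfμ ⊢
      rw [key Af, key Bf]
      omega
    omega
  obtain ⟨m₁', hm₁inj, hm₁mem⟩ := (Finset.all_card_le_biUnion_card_iff_exists_injective
    (fun u : ↥U => Bf.filter (fun b => Tight ↑u b))).mp hallA
  obtain ⟨g', hginj, hgmem⟩ := (Finset.all_card_le_biUnion_card_iff_exists_injective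
    (fun v : ↥W => Af.filter (fun a => Tight a ↑v))).mp hallB
  set m₁ : V → V := fun a => if h : a ∈ U then m₁' ⟨a, h⟩ else a with hm₁
  set g : V → V := fun v => if h : v ∈ W then g' ⟨v, h⟩ else v with hg
  have hm₁B : ∀ a ∈ U, m₁ a ∈ Bf ∧ Tight a (m₁ a) := by
    intro a ha
    simp only [hm₁, dif_pos ha]
    exact mem_filter.mp (hm₁mem ⟨a, ha⟩)
  have hm₁i : ∀ a ∈ U, ∀ a' ∈ U, m₁ a = m₁ a' → a = a' := by
    intro a ha a' ha' h
    simp only [hm₁, dif_pos ha, dif_pos ha'] at h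
    exact congrArg Subtype.val (hm₁inj h)
  have hgA : ∀ v ∈ W, g v ∈ Af ∧ Tight (g v) v := by
    intro v hv
    simp only [hg, dif_pos hv]
    exact mem_filter.mp (hgmem ⟨v, hv⟩)
  have hgi : ∀ v ∈ W, ∀ v' ∈ W, g v = g v' → v = v' := by
    intro v hv v' hv' h
    simp only [hg, dif_pos hv, dif_pos hv'] at h
    exact congrArg Subtype.val (hginj h)
  set step : V → V → Prop := fun a a' => a ∈ U ∧ m₁ a ∈ W ∧ a' = g (m₁ a) ∧ a' ∈ U with hstep
  set R : Finset V := U.filter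
    (fun a => ∃ u₀ ∈ U, u₀ ∉ W.image g ∧ Relation.ReflTransGen step u₀ a) with hR
  have hRU : ∀ a ∈ R, a ∈ U := fun a ha => (mem_filter.mp ha).1
  have hRclosed : ∀ a ∈ R, m₁ a ∈ W → g (m₁ a) ∈ U → g (m₁ a) ∈ R := by
    intro a ha h1 h2
    obtain ⟨haU, u₀, hu₀U, hu₀, hrtg⟩ := mem_filter.mp ha
    exact mem_filter.mpr ⟨h2, u₀, hu₀U, hu₀, hrtg.tail ⟨haU, h1, rfl, h2⟩⟩
  have hRstart : ∀ u ∈ U, u ∉ W.image g → u ∈ R := fun u hu hni =>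
    mem_filter.mpr ⟨hu, u, hu, hni, Relation.ReflTransGen.refl⟩
  have hkey : ∀ v ∈ W, g v ∈ R → v ∈ R.image m₁ := by
    intro v hv hgvR
    obtain ⟨hgvU, u₀, hu₀U, hu₀, hrtg⟩ := mem_filter.mp hgvR
    rcases hrtg.cases_tail with heq | ⟨c, hc, hstepc⟩
    · exact absurd (heq ▸ mem_image.mpr ⟨v, hv, rfl⟩) hu₀
    · obtain ⟨hcU, hcW, hgeq, -⟩ := hstepc
      have hveq : m₁ c = v := hgi _ hcW _ hv hgeq.symm
      have hcR : c ∈ R := mem_filter.mpr ⟨hcU, u₀, hu₀U, hu₀, hc⟩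
      exact mem_image.mpr ⟨c, hcR, hveq⟩
  set Q : Finset V := W.filter (fun v => g v ∉ R ∧ v ∉ R.image m₁) with hQ
  set P : Finset (V × V) := R.image (fun u => (u, m₁ u)) ∪ Q.image (fun v => (g v, v)) with hP
  have memP : ∀ p ∈ P, (p.1 ∈ R ∧ p.2 = m₁ p.1) ∨ (p.2 ∈ Q ∧ p.1 = g p.2) := by
    intro p hp
    rcases mem_union.mp hp with h | h
    · obtain ⟨u, hu, rfl⟩ := mem_image.mp h
      exact Or.inl ⟨hu, rfl⟩
    · obtain ⟨v, hv, rfl⟩ := mem_image.mp h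
      exact Or.inr ⟨hv, rfl⟩
  have pairsAB : ∀ p ∈ P, p.1 ∈ Af ∧ p.2 ∈ Bf ∧ Tight p.1 p.2 := by
    intro p hp
    rcases memP p hp with ⟨h1, h2⟩ | ⟨h1, h2⟩
    · have hU' := hRU _ h1
      obtain ⟨hb, ht⟩ := hm₁B _ hU'
      exact ⟨(mem_filter.mp hU').1, h2 ▸ hb, h2 ▸ ht⟩
    · have hW' := (mem_filter.mp h1).1
      obtain ⟨ha, ht⟩ := hgA _ hW'
      exact ⟨h2 ▸ ha, (mem_filter.mp hW').1, h2 ▸ ht⟩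
  have fstinj : ∀ p ∈ P, ∀ q ∈ P, p.1 = q.1 → p = q := by
    intro p hp q hq h
    rcases memP p hp with ⟨h1, h2⟩ | ⟨h1, h2⟩ <;> rcases memP q hq with ⟨h3, h4⟩ | ⟨h3, h4⟩
    · exact Prod.ext h (by rw [h2, h4, h])
    · exact absurd (h ▸ h1) (by rw [h4]; exact (mem_filter.mp h3).2.1)
    · exact absurd (h ▸ h3) (by rw [h2]; exact (mem_filter.mp h1).2.1)
    · have : p.2 = q.2 := hgi _ (mem_filter.mp h1).1 _ (mem_filter.mp h3).1 (by rw [← h2, ← h4, h])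
      exact Prod.ext h this
  have sndinj : ∀ p ∈ P, ∀ q ∈ P, p.2 = q.2 → p = q := by
    intro p hp q hq h
    rcases memP p hp with ⟨h1, h2⟩ | ⟨h1, h2⟩ <;> rcases memP q hq with ⟨h3, h4⟩ | ⟨h3, h4⟩
    · have : p.1 = q.1 := hm₁i _ (hRU _ h1) _ (hRU _ h3) (by rw [← h2, ← h4, h])
      exact Prod.ext this h
    · exact absurd (mem_image.mpr ⟨p.1, h1, by rw [← h2, h]⟩)
        ((mem_filter.mp h3).2.2)
    · exact absurd (mem_image.mpr ⟨q.1, h3, by rw [← h4, ← h]⟩)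
        ((mem_filter.mp h1).2.2)
    · exact Prod.ext (by rw [h2, h4, h]) h
  have hcovU : ∀ u ∈ U, u ∈ P.image Prod.fst := by
    intro u hu
    by_cases huR : u ∈ R
    · exact mem_image.mpr ⟨(u, m₁ u), mem_union_left _ (mem_image.mpr ⟨u, huR, rfl⟩), rfl⟩
    · have himg : u ∈ W.image g := by
        by_contra hni
        exact huR (hRstart u hu hni)
      obtain ⟨v, hvW, hgv⟩ := mem_image.mp himg
      have hvQ : v ∈ Q := by
        refine mem_filter.mpr ⟨hvW, by rw [hgv]; exact huR, ?_⟩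
        rintro himg2
        obtain ⟨c, hcR, hm⟩ := mem_image.mp himg2
        have := hRclosed c hcR (hm ▸ hvW) (by rw [hm, hgv]; exact hu)
        rw [hm, hgv] at this
        exact huR this
      exact mem_image.mpr ⟨(g v, v), mem_union_right _ (mem_image.mpr ⟨v, hvQ, rfl⟩), hgv⟩
  have hcovW : ∀ v ∈ W, v ∈ P.image Prod.snd := by
    intro v hv
    by_cases hvim : v ∈ R.image m₁
    · obtain ⟨c, hcR, hm⟩ := mem_image.mp hvim
      exact mem_image.mpr ⟨(c, m₁ c), mem_union_left _ (mem_image.mpr ⟨c, hcR, rfl⟩), hm⟩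
    · by_cases hgvR : g v ∈ R
      · exact absurd (hkey v hv hgvR) hvim
      · exact mem_image.mpr ⟨(g v, v),
          mem_union_right _ (mem_image.mpr ⟨v, mem_filter.mpr ⟨hv, hgvR, hvim⟩, rfl⟩), rfl⟩
  set Am : Finset V := P.image Prod.fst with hAmdef
  set Bm : Finset V := P.image Prod.snd with hBmdef
  have hAmA : Am ⊆ Af := by
    intro a ha; obtain ⟨p, hp, rfl⟩ := mem_image.mp ha; exact (pairsAB p hp).1
  have hBmB : Bm ⊆ Bf := by
    intro b hb; obtain ⟨p, hp, rfl⟩ := mem_image.mp hb; exact (pairsAB p hp).2.1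
  have h1 : ∑ u ∈ Af \ Am, f u = -(((Af \ Am).card : ℤ)) := by
    have hc : ∀ u ∈ Af \ Am, f u = -1 := by
      intro u hu
      obtain ⟨huA, huM⟩ := mem_sdiff.mp hu
      have hnU : u ∉ U := fun hU' => huM (hcovU u hU')
      have hb := (hbA f hf u huA).1
      by_contra hne
      exact hnU (mem_filter.mpr ⟨huA, by omega⟩)
    rw [Finset.sum_congr rfl hc, Finset.sum_const]
    simp
  have h2 : ∑ v ∈ Bf \ Bm, f v = 2 * ((Bf \ Bm).card : ℤ) := by
    have hc : ∀ v ∈ Bf \ Bm, f v = 2 := by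
      intro v hv
      obtain ⟨hvB, hvM⟩ := mem_sdiff.mp hv
      have hnW : v ∉ W := fun hW' => hvM (hcovW v hW')
      have hb := (hbB f hf v hvB).2
      by_contra hne
      exact hnW (mem_filter.mpr ⟨hvB, by omega⟩)
    rw [Finset.sum_congr rfl hc, Finset.sum_const]
    simp [mul_comm]
  have h3 : ∑ a ∈ Am, f a = ∑ p ∈ P, f p.1 :=
    Finset.sum_image (fun p hp q hq h => fstinj p hp q hq h)
  have h4 : ∑ b ∈ Bm, f b = ∑ p ∈ P, f p.2 :=
    Finset.sum_image (fun p hp q hq h => sndinj p hp q hq h)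
  have h5 : (∑ p ∈ P, f p.1) - (∑ p ∈ P, f p.2) = -∑ p ∈ P, (d p.1 p.2 : ℤ) := by
    rw [← Finset.sum_sub_distrib, ← Finset.sum_neg_distrib]
    exact Finset.sum_congr rfl (fun p hp => by
      have ht := (pairsAB p hp).2.2
      simp only [hTight] at ht
      omega)
  have h6 := Finset.sum_sdiff (f := f) hAmA
  have h7 := Finset.sum_sdiff (f := f) hBmB
  have hc1 : ((Af \ Am).card : ℤ) = (Af.card : ℤ) - (Am.card : ℤ) := by
    rw [Finset.card_sdiff_of_subset hAmA]
    have := Finset.card_le_card hAmA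
    omega
  have hc2 : ((Bf \ Bm).card : ℤ) = (Bf.card : ℤ) - (Bm.card : ℤ) := by
    rw [Finset.card_sdiff_of_subset hBmB]
    have := Finset.card_le_card hBmB
    omega
  refine ⟨f, P, hf.1, hf.2.1, hf.2.2,
    (fun p hp => ⟨(pairsAB p hp).1, (pairsAB p hp).2.1⟩), fstinj, sndinj, ?_⟩
  rw [← hAmdef, ← hBmdef, ← h6, ← h7]
  omega

theorem ball_finite_s5 {V : Type} (H : SimpleGraph V) (hconn : H.Connected)
    (hfin : ∀ x : V, {y | H.Adj x y}.Finite) (x : V) :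
    ∀ r : ℕ, {t | H.dist x t ≤ r}.Finite := by
  intro r
  induction r with
  | zero =>
    apply Set.Finite.subset (Set.finite_singleton x)
    intro t ht
    simp only [Set.mem_setOf_eq, Nat.le_zero] at ht
    simp [(hconn.dist_eq_zero_iff.mp ht)]
  | succ n ih =>
    apply Set.Finite.subset (ih.union (Set.Finite.biUnion ih (fun y _ => hfin y)))
    intro t ht
    simp only [Set.mem_setOf_eq] at ht
    rcases Nat.lt_or_ge (H.dist x t) (n+1) with h | h
    · exact Or.inl (Nat.lt_succ_iff.mp h)
    · have heq : H.dist x t = n + 1 := le_antisymm ht h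
      have hne : t ≠ x := by
        intro hh; rw [hh] at heq; simp [SimpleGraph.dist_self] at heq
      obtain ⟨p, hp⟩ := SimpleGraph.exists_walk_of_dist_ne_zero (by omega : H.dist x t ≠ 0)
      obtain ⟨y, hadj, p', hpeq⟩ := SimpleGraph.Walk.exists_eq_cons_of_ne hne p.reverse
      have hlen : p'.length + 1 = n + 1 := by
        have h1 : p.reverse.length = n + 1 := by rw [SimpleGraph.Walk.length_reverse, hp, heq]
        rw [hpeq] at h1
        simpa using h1
      have hdy : H.dist x y ≤ n := by
        have := SimpleGraph.dist_le p'.reverse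
        rwa [SimpleGraph.Walk.length_reverse, (by omega : p'.length = n)] at this
      exact Or.inr (Set.mem_biUnion hdy hadj.symm)

open Finset in
/-- On a combinatorial graph, for adjacent `x₀ ∼ y₀` there is a `{0,1}`-valued optimal transport
plan `ρ` on `B_1(x₀) × B_1(y₀)` with unit marginals on the neighbors of `x₀` resp. `y₀`,
`ρ(z,z) = 1` on `B_1(x₀) ∩ B_1(y₀)`, realizing `κ(x₀,y₀) = ∑_{x,y} ρ(x,y)(1 - d(x,y))`. -/
theorem stmt5 {V : Type} [Countable V] (G : WeightedGraph V)
    (hconn : G.toSimple.Connected)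
    (hcomb : ∀ u v, G.w u v = 0 ∨ G.w u v = 1) (hm : ∀ v, G.m v = 1)
    (x₀ y₀ : V) (hadj : G.toSimple.Adj x₀ y₀) :
    ∃ ρ : V → V → ℝ,
      (∀ u v, ρ u v = 0 ∨ ρ u v = 1) ∧
      (∀ u v, ρ u v ≠ 0 → G.dist x₀ u ≤ 1 ∧ G.dist y₀ v ≤ 1) ∧
      (∀ u, G.toSimple.Adj x₀ u → (∑ᶠ v ∈ {v | G.dist y₀ v ≤ 1}, ρ u v) = 1) ∧
      (∀ v, G.toSimple.Adj y₀ v → (∑ᶠ u ∈ {u | G.dist x₀ u ≤ 1}, ρ u v) = 1) ∧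
      (∀ z, G.dist x₀ z ≤ 1 → G.dist y₀ z ≤ 1 → ρ z z = 1) ∧
      G.curv x₀ y₀ = ∑ᶠ u, ∑ᶠ v, ρ u v * (1 - (G.dist u v : ℝ)) := by
  classical
  -- basic adjacency and weight facts
  have hadj_iff : ∀ u v, G.toSimple.Adj u v ↔ G.w u v ≠ 0 := by
    intro u v
    constructor
    · exact fun h => h.2
    · intro h
      exact ⟨fun he => h (he ▸ G.loopless u), h⟩
  have hw1 : ∀ u v, G.toSimple.Adj u v → G.w u v = 1 := fun u v h =>
    (hcomb u v).resolve_left h.2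
  have hnfin : ∀ x, {y | G.toSimple.Adj x y}.Finite := fun x =>
    (G.locFin x).subset (fun y hy => hy.2)
  -- distance facts
  have hGd : ∀ a b, G.toSimple.dist a b = G.dist a b := fun _ _ => rfl
  have hdself : ∀ a, G.dist a a = 0 := fun a => show G.toSimple.dist a a = 0 from
    SimpleGraph.dist_self
  have hdsymm : ∀ a b, G.dist a b = G.dist b a := fun a b =>
    show G.toSimple.dist a b = G.toSimple.dist b a from SimpleGraph.dist_comm
  have hdtri : ∀ a b c, G.dist a c ≤ G.dist a b + G.dist b c := fun a b c =>
    show G.toSimple.dist a c ≤ G.toSimple.dist a b + G.toSimple.dist b c from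
      hconn.dist_triangle
  have hdpos : ∀ a b, a ≠ b → 1 ≤ G.dist a b := fun a b h =>
    show 1 ≤ G.toSimple.dist a b from hconn.pos_dist_of_ne h
  have hdadj : ∀ a b, G.toSimple.Adj a b → G.dist a b = 1 := fun a b h =>
    show G.toSimple.dist a b = 1 from SimpleGraph.dist_eq_one_iff_adj.mpr h
  have hdle1 : ∀ a b, G.dist a b ≤ 1 ↔ (a = b ∨ G.toSimple.Adj a b) := by
    intro a b
    constructor
    · intro h
      rcases Nat.lt_or_ge (G.dist a b) 1 with h1 | h1
      · left
        exact hconn.dist_eq_zero_iff.mp (by rw [hGd]; omega)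
      · right
        exact SimpleGraph.dist_eq_one_iff_adj.mp (by rw [hGd]; omega)
    · rintro (rfl | h)
      · simp [hdself]
      · simp [hdadj a b h]
  -- neighborhoods
  set Nx : Finset V := (hnfin x₀).toFinset with hNx
  set Ny : Finset V := (hnfin y₀).toFinset with hNy
  have hmemNx : ∀ u, u ∈ Nx ↔ G.toSimple.Adj x₀ u := by
    intro u; rw [hNx, Set.Finite.mem_toFinset]; rfl
  have hmemNy : ∀ v, v ∈ Ny ↔ G.toSimple.Adj y₀ v := by
    intro v; rw [hNy, Set.Finite.mem_toFinset]; rfl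
  have hxNx : x₀ ∉ Nx := fun h => G.toSimple.loopless.irrefl x₀ ((hmemNx x₀).mp h)
  have hyNy : y₀ ∉ Ny := fun h => G.toSimple.loopless.irrefl y₀ ((hmemNy y₀).mp h)
  have hyNx : y₀ ∈ Nx := (hmemNx y₀).mpr hadj
  have hxNy : x₀ ∈ Ny := (hmemNy x₀).mpr hadj.symm
  have hxyne : x₀ ≠ y₀ := hadj.ne
  set Cf : Finset V := Nx ∩ Ny with hCf
  set Af : Finset V := Nx.filter (fun u => ¬ (u = y₀ ∨ u ∈ Ny)) with hAf
  set Bf : Finset V := Ny.filter (fun v => ¬ (v = x₀ ∨ v ∈ Nx)) with hBf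
  have hd1 : G.dist x₀ y₀ = 1 := hdadj _ _ hadj
  have hA1 : ∀ u ∈ Af, G.dist x₀ u = 1 := fun u hu =>
    hdadj _ _ ((hmemNx u).mp (mem_filter.mp hu).1)
  have hB1 : ∀ v ∈ Bf, G.dist y₀ v = 1 := fun v hv =>
    hdadj _ _ ((hmemNy v).mp (mem_filter.mp hv).1)
  have hA2 : ∀ u ∈ Af, G.dist y₀ u = 2 := by
    intro u hu
    obtain ⟨h1, h2⟩ := mem_filter.mp hu
    push_neg at h2
    have hub : G.dist y₀ u ≤ 2 := by
      have := hdtri y₀ x₀ u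
      rw [hdsymm y₀ x₀, hd1, hA1 u hu] at this
      omega
    have hne : ¬ (G.dist y₀ u ≤ 1) := by
      rw [hdle1]
      rintro (h | h)
      · exact h2.1 h.symm
      · exact h2.2 ((hmemNy u).mpr h)
    omega
  have hB2 : ∀ v ∈ Bf, G.dist x₀ v = 2 := by
    intro v hv
    obtain ⟨h1, h2⟩ := mem_filter.mp hv
    push_neg at h2
    have hub : G.dist x₀ v ≤ 2 := by
      have := hdtri x₀ y₀ v
      rw [hd1, hB1 v hv] at this
      omega
    have hne : ¬ (G.dist x₀ v ≤ 1) := by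
      rw [hdle1]
      rintro (h | h)
      · exact h2.1 h.symm
      · exact h2.2 ((hmemNx v).mpr h)
    omega
  -- apply the core combinatorial lemma
  obtain ⟨f, P, hfx, hfy, hfLip, hPab, hPfst, hPsnd, hslack⟩ :=
    core G.dist x₀ y₀ hdself hdsymm hdtri hdpos Af Bf hd1 hA1 hA2 hB1 hB2
  set T : Finset V := insert x₀ (insert y₀ (Af ∪ Bf)) with hTdef
  have hxT : x₀ ∈ T := by simp [hTdef]
  have hyT : y₀ ∈ T := by simp [hTdef]
  have hAT : ∀ u ∈ Af, u ∈ T := fun u hu => by simp [hTdef, hu]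
  have hBT : ∀ v ∈ Bf, v ∈ T := fun v hv => by simp [hTdef, hv]
  have hdx2 : ∀ t ∈ T, G.dist x₀ t ≤ 2 := by
    intro t ht
    simp only [hTdef, mem_insert, mem_union] at ht
    rcases ht with rfl | rfl | h | h
    · simp [hdself]
    · omega
    · have := hA1 t h; omega
    · have := hB2 t h; omega
  have hbT : ∀ t ∈ T, -2 ≤ f t ∧ f t ≤ 2 := by
    intro t ht
    have h1 := hfLip x₀ hxT t ht
    have h2 := hfLip t ht x₀ hxT
    rw [hdsymm t x₀] at h2
    have h3 := hdx2 t ht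
    rw [hfx] at h1 h2
    have h4 : ((G.dist x₀ t : ℕ) : ℤ) ≤ 2 := by exact_mod_cast h3
    constructor <;> omega
  have hTne : T.Nonempty := ⟨x₀, hxT⟩
  set F : V → ℤ := fun t => T.inf' hTne (fun s => f s + (G.dist s t : ℤ)) with hFdef
  have hFle : ∀ t, ∀ s ∈ T, F t ≤ f s + (G.dist s t : ℤ) := fun t s hs =>
    Finset.inf'_le _ hs
  have hFT : ∀ t ∈ T, F t = f t := by
    intro t ht
    apply le_antisymm
    · have := hFle t t ht
      simpa [hdself] using this
    · apply Finset.le_inf'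
      intro s hs
      have := hfLip s hs t ht
      omega
  have hFlipd : ∀ a b, F a - F b ≤ (G.dist a b : ℤ) := by
    intro a b
    obtain ⟨s, hs, hse⟩ := Finset.exists_mem_eq_inf' hTne (fun s => f s + (G.dist s b : ℤ))
    have hFb : F b = f s + (G.dist s b : ℤ) := hse
    have h1 : F a ≤ f s + (G.dist s a : ℤ) := hFle a s hs
    have h2 : (G.dist s a : ℤ) ≤ (G.dist s b : ℤ) + (G.dist b a : ℤ) := by
      exact_mod_cast hdtri s b a
    rw [hdsymm b a] at h2
    omega
  set cap : V → ℤ := fun t => max 0 (4 - (G.dist x₀ t : ℤ)) with hcapdef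
  have hcaplip : ∀ a b, cap a - cap b ≤ (G.dist a b : ℤ) := by
    intro a b
    have h1 : (G.dist x₀ b : ℤ) ≤ (G.dist x₀ a : ℤ) + (G.dist a b : ℤ) := by
      exact_mod_cast hdtri x₀ a b
    have h2 : (0:ℤ) ≤ (G.dist a b : ℤ) := Int.ofNat_nonneg _
    simp only [hcapdef]
    omega
  have hcapT : ∀ t ∈ T, 2 ≤ cap t := by
    intro t ht
    have h3 := hdx2 t ht
    have h4 : ((G.dist x₀ t : ℕ) : ℤ) ≤ 2 := by exact_mod_cast h3
    simp only [hcapdef]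
    omega
  set E : V → ℤ := fun t => max (min (F t) (cap t)) (-cap t) with hEdef
  have hET : ∀ t ∈ T, E t = f t := by
    intro t ht
    have h1 := hFT t ht
    have h2 := hcapT t ht
    have h3 := hbT t ht
    simp only [hEdef, h1]
    omega
  have hElip : ∀ a b, E a - E b ≤ (G.dist a b : ℤ) := by
    intro a b
    have h1 := hFlipd a b
    have h2 := hcaplip a b
    have h3 := hcaplip b a
    have h4 := hFlipd b a
    have h5 : (0:ℤ) ≤ (G.dist a b : ℤ) := Int.ofNat_nonneg _
    have hsym : (G.dist b a : ℤ) = (G.dist a b : ℤ) := by rw [hdsymm b a]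
    rw [hsym] at h3 h4
    simp only [hEdef]
    omega
  have hE0 : ∀ t, 4 ≤ G.dist x₀ t → E t = 0 := by
    intro t ht
    have ht' : (4:ℤ) ≤ (G.dist x₀ t : ℤ) := by exact_mod_cast ht
    have hcap0 : cap t = 0 := by simp only [hcapdef]; omega
    simp only [hEdef, hcap0]
    omega
  set rf : V → ℝ := fun t => ((E t : ℤ) : ℝ) with hrfdef
  have hrfLip : G.Lip1 rf := by
    intro a b
    have hi : |(E a - E b : ℤ)| ≤ (G.dist a b : ℤ) := by
      rw [abs_le]
      constructor
      · have := hElip b a; rw [hdsymm b a] at this; omega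
      · exact hElip a b
    have : rf a - rf b = ((E a - E b : ℤ) : ℝ) := by simp [hrfdef]
    rw [this, ← Int.cast_abs]
    exact_mod_cast hi
  have hrfsupp : (Function.support rf).Finite := by
    apply Set.Finite.subset (ball_finite_s5 G.toSimple hconn hnfin x₀ 3)
    intro t ht
    simp only [Function.mem_support] at ht
    simp only [Set.mem_setOf_eq, hGd]
    by_contra hcon
    exact ht (by simp [hrfdef, hE0 t (by omega)])
  have hrfx : rf x₀ = 0 := by
    simp [hrfdef, hET x₀ hxT, hfx]
  have hrfy : rf y₀ = 1 := by
    simp [hrfdef, hET y₀ hyT, hfy]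
  -- Laplacian formula
  have hlap : ∀ (φ : V → ℝ) (z : V), G.lap φ z = ∑ y ∈ (hnfin z).toFinset, (φ y - φ z) := by
    intro φ z
    have hsupp : (Function.support fun y => G.w z y * (φ y - φ z)) ⊆
        ↑((hnfin z).toFinset) := by
      intro y hy
      simp only [Function.mem_support] at hy
      have hw : G.w z y ≠ 0 := fun h => hy (by rw [h]; ring)
      simp only [Finset.coe_sort_coe, Set.Finite.coe_toFinset, Set.mem_setOf_eq]
      exact (hadj_iff z y).mpr hw
    simp only [WeightedGraph.lap, hm z, div_one]
    rw [finsum_eq_finset_sum_of_support_subset _ hsupp]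
    apply Finset.sum_congr rfl
    intro y hy
    rw [Set.Finite.mem_toFinset] at hy
    rw [hw1 z y hy, one_mul]
  -- decomposition of neighborhoods
  have eNx : Nx = insert y₀ (Cf ∪ Af) := by
    ext u
    simp only [mem_insert, mem_union, hCf, mem_inter, hAf, mem_filter]
    constructor
    · intro hu
      by_cases h1 : u = y₀
      · exact Or.inl h1
      · by_cases h2 : u ∈ Ny
        · exact Or.inr (Or.inl ⟨hu, h2⟩)
        · exact Or.inr (Or.inr ⟨hu, by tauto⟩)
    · rintro (rfl | ⟨h, _⟩ | ⟨h, _⟩) <;> first | exact hyNx | exact h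
  have eNy : Ny = insert x₀ (Cf ∪ Bf) := by
    ext u
    simp only [mem_insert, mem_union, hCf, mem_inter, hBf, mem_filter]
    constructor
    · intro hu
      by_cases h1 : u = x₀
      · exact Or.inl h1
      · by_cases h2 : u ∈ Nx
        · exact Or.inr (Or.inl ⟨h2, hu⟩)
        · exact Or.inr (Or.inr ⟨hu, by tauto⟩)
    · rintro (rfl | ⟨_, h⟩ | ⟨h, _⟩) <;> first | exact hxNy | exact h
  have hyCA : y₀ ∉ Cf ∪ Af := by
    intro h
    rcases mem_union.mp h with h | h
    · exact hyNy (mem_inter.mp h).2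
    · exact (mem_filter.mp h).2 (Or.inl rfl)
  have hxCB : x₀ ∉ Cf ∪ Bf := by
    intro h
    rcases mem_union.mp h with h | h
    · exact hxNx (mem_inter.mp h).1
    · exact (mem_filter.mp h).2 (Or.inl rfl)
  have hdCA : Disjoint Cf Af := by
    rw [Finset.disjoint_left]
    intro a ha hb
    exact (mem_filter.mp hb).2 (Or.inr (mem_inter.mp ha).2)
  have hdCB : Disjoint Cf Bf := by
    rw [Finset.disjoint_left]
    intro a ha hb
    exact (mem_filter.mp hb).2 (Or.inr (mem_inter.mp ha).1)
  have hNycard : (Ny.card : ℝ) = 1 + (Cf.card : ℝ) + (Bf.card : ℝ) := by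
    rw [eNy, card_insert_of_notMem hxCB, card_union_of_disjoint hdCB]
    push_cast
    ring
  have hval : ∀ φ : V → ℝ, φ x₀ = 0 → φ y₀ = 1 →
      G.lap φ x₀ - G.lap φ y₀
        = 2 + (Cf.card : ℝ) + (Bf.card : ℝ) + ((∑ u ∈ Af, φ u) - ∑ v ∈ Bf, φ v) := by
    intro φ h0 h1
    have hx' : G.lap φ x₀ = ∑ u ∈ Nx, φ u := by
      rw [hlap φ x₀, ← hNx, Finset.sum_sub_distrib, Finset.sum_const, h0]
      simp
    have hy' : G.lap φ y₀ = (∑ v ∈ Ny, φ v) - Ny.card := by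
      rw [hlap φ y₀, ← hNy, Finset.sum_sub_distrib, Finset.sum_const, h1]
      simp
    have hsx : ∑ u ∈ Nx, φ u = 1 + ((∑ u ∈ Cf, φ u) + ∑ u ∈ Af, φ u) := by
      rw [eNx, Finset.sum_insert hyCA, Finset.sum_union hdCA, h1]
    have hsy : ∑ v ∈ Ny, φ v = (∑ v ∈ Cf, φ v) + ∑ v ∈ Bf, φ v := by
      rw [eNy, Finset.sum_insert hxCB, Finset.sum_union hdCB, h0]
      ring
    rw [hx', hy', hsx, hsy, hNycard]
    ring
  have hlaptrans : ∀ (φ : V → ℝ) (c : ℝ) (z : V), G.lap (fun t => φ t - c) z = G.lap φ z := by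
    intro φ c z
    simp only [WeightedGraph.lap]
    congr 1
    apply finsum_congr
    intro y
    ring
  set Am : Finset V := P.image Prod.fst with hAmdef
  set Bm : Finset V := P.image Prod.snd with hBmdef
  have hAmA : Am ⊆ Af := by
    intro a ha; obtain ⟨p, hp, rfl⟩ := mem_image.mp ha; exact (hPab p hp).1
  have hBmB : Bm ⊆ Bf := by
    intro b hb; obtain ⟨p, hp, rfl⟩ := mem_image.mp hb; exact (hPab p hp).2
  set Pval : ℝ := 2 + (Cf.card : ℝ) + (Bf.card : ℝ)
      + (((∑ u ∈ Af, f u) - ∑ v ∈ Bf, f v : ℤ) : ℝ) with hPvaldef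
  have hsA : ∑ u ∈ Af, rf u = ((∑ u ∈ Af, f u : ℤ) : ℝ) := by
    push_cast
    apply Finset.sum_congr rfl
    intro u hu
    simp [hrfdef, hET u (hAT u hu)]
  have hsB : ∑ v ∈ Bf, rf v = ((∑ v ∈ Bf, f v : ℤ) : ℝ) := by
    push_cast
    apply Finset.sum_congr rfl
    intro v hv
    simp [hrfdef, hET v (hBT v hv)]
  have hmem : ∃ φ : V → ℝ, G.Lip1 φ ∧ (Function.support φ).Finite ∧
      φ y₀ - φ x₀ = (G.dist x₀ y₀ : ℝ) ∧
      Pval = (G.lap φ x₀ - G.lap φ y₀) / (G.dist x₀ y₀ : ℝ) := by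
    refine ⟨rf, hrfLip, hrfsupp, by rw [hrfx, hrfy, hd1]; norm_num, ?_⟩
    rw [hd1]
    push_cast
    rw [div_one, hval rf hrfx hrfy, hPvaldef, hsA, hsB]
    push_cast
    ring
  have hlb : ∀ c : ℝ, (∃ φ : V → ℝ, G.Lip1 φ ∧ (Function.support φ).Finite ∧
      φ y₀ - φ x₀ = (G.dist x₀ y₀ : ℝ) ∧
      c = (G.lap φ x₀ - G.lap φ y₀) / (G.dist x₀ y₀ : ℝ)) → Pval ≤ c := by
    rintro c ⟨φ, hφLip, -, hφ1, rfl⟩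
    rw [hd1] at hφ1 ⊢
    push_cast at hφ1 ⊢
    rw [div_one]
    set ψ : V → ℝ := fun t => φ t - φ x₀ with hψdef
    have hψx : ψ x₀ = 0 := by simp [hψdef]
    have hψy : ψ y₀ = 1 := by simp only [hψdef]; linarith
    have hlapeq : ∀ z, G.lap φ z = G.lap ψ z := fun z => (hlaptrans φ (φ x₀) z).symm
    rw [hlapeq x₀, hlapeq y₀, hval ψ hψx hψy]
    have hψLip : ∀ a b, |ψ a - ψ b| ≤ ((G.dist a b : ℕ) : ℝ) := by
      intro a b
      have h := hφLip a b
      simpa only [hψdef, sub_sub_sub_cancel_right] using h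
    have hub : ∀ u ∈ Af, -1 ≤ ψ u := by
      intro u hu
      have h := hψLip u x₀
      rw [hψx, sub_zero, hdsymm u x₀, hA1 u hu] at h
      have h2 := (abs_le.mp h).1
      norm_num at h2
      linarith
    have hvb : ∀ v ∈ Bf, ψ v ≤ 2 := by
      intro v hv
      have h := hψLip v x₀
      rw [hψx, sub_zero, hdsymm v x₀, hB2 v hv] at h
      have h2 := (abs_le.mp h).2
      norm_num at h2
      linarith
    have hpb : ∀ p ∈ P, -((G.dist p.1 p.2 : ℕ) : ℝ) ≤ ψ p.1 - ψ p.2 := by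
      intro p hp
      exact (abs_le.mp (hψLip p.1 p.2)).1
    have split1 : ∑ u ∈ Af, ψ u = (∑ u ∈ Af \ Am, ψ u) + ∑ u ∈ Am, ψ u :=
      (Finset.sum_sdiff hAmA).symm
    have split2 : ∑ v ∈ Bf, ψ v = (∑ v ∈ Bf \ Bm, ψ v) + ∑ v ∈ Bm, ψ v :=
      (Finset.sum_sdiff hBmB).symm
    have e3 : ∑ a ∈ Am, ψ a = ∑ p ∈ P, ψ p.1 :=
      Finset.sum_image (fun p hp q hq h => hPfst p hp q hq h)
    have e4 : ∑ b ∈ Bm, ψ b = ∑ p ∈ P, ψ p.2 :=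
      Finset.sum_image (fun p hp q hq h => hPsnd p hp q hq h)
    have i1 : -(((Af \ Am).card : ℝ)) ≤ ∑ u ∈ Af \ Am, ψ u := by
      calc -(((Af \ Am).card : ℝ)) = ∑ _u ∈ Af \ Am, (-1 : ℝ) := by simp
      _ ≤ _ := Finset.sum_le_sum (fun u hu => hub u (mem_sdiff.mp hu).1)
    have i2 : ∑ v ∈ Bf \ Bm, ψ v ≤ 2 * ((Bf \ Bm).card : ℝ) := by
      calc ∑ v ∈ Bf \ Bm, ψ v ≤ ∑ _v ∈ Bf \ Bm, (2:ℝ) :=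
        Finset.sum_le_sum (fun v hv => hvb v (mem_sdiff.mp hv).1)
      _ = _ := by simp [mul_comm]
    have i3 : -(∑ p ∈ P, ((G.dist p.1 p.2 : ℕ) : ℝ)) ≤ ∑ p ∈ P, (ψ p.1 - ψ p.2) := by
      rw [← Finset.sum_neg_distrib]
      exact Finset.sum_le_sum (fun p hp => hpb p hp)
    have i4 : ∑ p ∈ P, (ψ p.1 - ψ p.2) = (∑ p ∈ P, ψ p.1) - ∑ p ∈ P, ψ p.2 :=
      Finset.sum_sub_distrib _ _
    have hc1 : ((Af \ Am).card : ℝ) = (Af.card : ℝ) - (Am.card : ℝ) := by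
      rw [card_sdiff_of_subset hAmA, Nat.cast_sub (card_le_card hAmA)]
    have hc2 : ((Bf \ Bm).card : ℝ) = (Bf.card : ℝ) - (Bm.card : ℝ) := by
      rw [card_sdiff_of_subset hBmB, Nat.cast_sub (card_le_card hBmB)]
    have hcast := congrArg (fun z : ℤ => (z : ℝ)) hslack
    push_cast at hcast
    rw [hPvaldef]
    push_cast
    linarith
  have hcurveq : G.curv x₀ y₀ = Pval := by
    simp only [WeightedGraph.curv]
    apply le_antisymm
    · exact csInf_le ⟨Pval, fun c hc => hlb c hc⟩ hmem
    · exact le_csInf ⟨Pval, hmem⟩ (fun c hc => hlb c hc)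
  -- the transport plan
  set B1x : Finset V := insert x₀ Nx with hB1xdef
  set B1y : Finset V := insert y₀ Ny with hB1ydef
  have hmemB1x : ∀ z, z ∈ B1x ↔ G.dist x₀ z ≤ 1 := by
    intro z
    rw [hB1xdef, mem_insert, hmemNx, hdle1 x₀ z]
    constructor
    · rintro (rfl | h)
      · exact Or.inl rfl
      · exact Or.inr h
    · rintro (rfl | h)
      · exact Or.inl rfl
      · exact Or.inr h
  have hmemB1y : ∀ z, z ∈ B1y ↔ G.dist y₀ z ≤ 1 := by
    intro z
    rw [hB1ydef, mem_insert, hmemNy, hdle1 y₀ z]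
    constructor
    · rintro (rfl | h)
      · exact Or.inl rfl
      · exact Or.inr h
    · rintro (rfl | h)
      · exact Or.inl rfl
      · exact Or.inr h
  have hAfNx : Af ⊆ Nx := filter_subset _ _
  have hBfNy : Bf ⊆ Ny := filter_subset _ _
  have hxAf : x₀ ∉ Af := fun h => hxNx (hAfNx h)
  have hyBf : y₀ ∉ Bf := fun h => hyNy (hBfNy h)
  have hyAf : y₀ ∉ Af := fun h => (mem_filter.mp h).2 (Or.inl rfl)
  have hxBf : x₀ ∉ Bf := fun h => (mem_filter.mp h).2 (Or.inl rfl)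
  have hABdisj : ∀ a, a ∈ Af → a ∈ Bf → False := fun a ha hb => by
    have h1 := hA2 a ha; have h2 := hB1 a hb; omega
  have hAdy : ∀ u ∈ Af, ¬ (G.dist y₀ u ≤ 1) := fun u hu => by
    rw [hA2 u hu]; omega
  have hBdx : ∀ v ∈ Bf, ¬ (G.dist x₀ v ≤ 1) := fun v hv => by
    rw [hB2 v hv]; omega
  have hAfB1x : ∀ u ∈ Af, u ∈ B1x := fun u hu => by
    rw [hB1xdef, mem_insert]; exact Or.inr (hAfNx hu)
  have hBfB1y : ∀ v ∈ Bf, v ∈ B1y := fun v hv => by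
    rw [hB1ydef, mem_insert]; exact Or.inr (hBfNy hv)
  set cond : V → V → Prop := fun u v =>
    (u = v ∧ G.dist x₀ u ≤ 1 ∧ G.dist y₀ u ≤ 1) ∨ ((u, v) ∈ P) ∨
    (u ∈ Af ∧ u ∉ Am ∧ v = y₀) ∨ (u = x₀ ∧ v ∈ Bf ∧ v ∉ Bm) with hconddef
  set ρ : V → V → ℝ := fun u v => if cond u v then 1 else 0 with hρdef
  have hcond_mem : ∀ u v, cond u v → (G.dist x₀ u ≤ 1 ∧ G.dist y₀ v ≤ 1) := by
    intro u v hc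
    rcases hc with ⟨heq, h1', h2'⟩ | hP | ⟨h3, h4, h5⟩ | ⟨h3, h4, h5⟩
    · exact ⟨h1', heq ▸ h2'⟩
    · exact ⟨by rw [hA1 _ (hPab _ hP).1], by rw [hB1 _ (hPab _ hP).2]⟩
    · exact ⟨by rw [hA1 _ h3], by rw [h5, hdself]; omega⟩
    · exact ⟨by rw [h3, hdself]; omega, by rw [hB1 _ h4]⟩
  have prop1 : ∀ u v, ρ u v = 0 ∨ ρ u v = 1 := by
    intro u v
    by_cases h : cond u v <;> simp [hρdef, h] <;> norm_num
  have prop2 : ∀ u v, ρ u v ≠ 0 → G.dist x₀ u ≤ 1 ∧ G.dist y₀ v ≤ 1 := by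
    intro u v h
    by_cases hc : cond u v
    · exact hcond_mem u v hc
    · exact absurd (by simp [hρdef, hc]) h
  have prop5 : ∀ z, G.dist x₀ z ≤ 1 → G.dist y₀ z ≤ 1 → ρ z z = 1 := by
    intro z h1 h2
    have hc : cond z z := Or.inl ⟨rfl, h1, h2⟩
    simp [hρdef, hc]
  -- row sums
  have prop3 : ∀ u, G.toSimple.Adj x₀ u → (∑ᶠ v ∈ {v | G.dist y₀ v ≤ 1}, ρ u v) = 1 := by
    intro u hu
    have huNx : u ∈ Nx := (hmemNx u).mpr hu
    have hset : {v | G.dist y₀ v ≤ 1} = ↑B1y := by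
      ext v; simp [hmemB1y v]
    rw [hset, finsum_mem_coe_finset]
    by_cases huA : u ∈ Af
    · by_cases huM : u ∈ Am
      · obtain ⟨p, hp, hp1⟩ := mem_image.mp huM
        have hrow : ∀ v, ρ u v = if v = p.2 then 1 else 0 := by
          intro v
          by_cases hv : v = p.2
          · have hpe : (u, v) = p := by rw [hv, ← hp1]
            have hc : cond u v := Or.inr (Or.inl (hpe ▸ hp))
            simp only [hρdef]
            rw [if_pos hc, if_pos hv]
          · have hc : ¬ cond u v := by
              rintro (⟨heq, h1', h2'⟩ | hP | ⟨h3, h4, h5⟩ | ⟨h3, h4, h5⟩)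
              · exact hAdy u huA h2'
              · exact hv (congrArg Prod.snd (hPfst (u, v) hP p hp (by rw [hp1])))
              · exact h4 huM
              · exact hxAf (h3 ▸ huA)
            simp [hρdef, hc, hv]
        rw [Finset.sum_congr rfl (fun v _ => hrow v), Finset.sum_ite_eq' B1y p.2 (fun _ => (1:ℝ))]
        simp [hBfB1y _ (hPab p hp).2]
      · have hrow : ∀ v, ρ u v = if v = y₀ then 1 else 0 := by
          intro v
          by_cases hv : v = y₀
          · have hc : cond u v := Or.inr (Or.inr (Or.inl ⟨huA, huM, hv⟩))
            simp only [hρdef]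
            rw [if_pos hc, if_pos hv]
          · have hc : ¬ cond u v := by
              rintro (⟨heq, h1', h2'⟩ | hP | ⟨h3, h4, h5⟩ | ⟨h3, h4, h5⟩)
              · exact hAdy u huA h2'
              · exact huM (mem_image.mpr ⟨(u, v), hP, rfl⟩)
              · exact hv h5
              · exact hxAf (h3 ▸ huA)
            simp [hρdef, hc, hv]
        rw [Finset.sum_congr rfl (fun v _ => hrow v), Finset.sum_ite_eq' B1y y₀ (fun _ => (1:ℝ))]
        simp [hB1ydef]
    · have huy : u = y₀ ∨ u ∈ Ny := by
        by_contra hcon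
        exact huA (mem_filter.mpr ⟨huNx, hcon⟩)
      have huB1y : u ∈ B1y := by
        rw [hB1ydef, mem_insert]
        exact huy
      have hdyu : G.dist y₀ u ≤ 1 := (hmemB1y u).mp huB1y
      have hdxu : G.dist x₀ u ≤ 1 := by rw [hdadj _ _ hu]
      have hrow : ∀ v, ρ u v = if v = u then 1 else 0 := by
        intro v
        by_cases hv : v = u
        · have hc : cond u v := Or.inl ⟨hv.symm, hdxu, hdyu⟩
          simp only [hρdef]
          rw [if_pos hc, if_pos hv]
        · have hc : ¬ cond u v := by
            rintro (⟨heq, h1', h2'⟩ | hP | ⟨h3, h4, h5⟩ | ⟨h3, h4, h5⟩)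
            · exact hv heq.symm
            · exact huA (hPab _ hP).1
            · exact huA h3
            · exact hxNx (h3 ▸ huNx)
          simp [hρdef, hc, hv]
      rw [Finset.sum_congr rfl (fun v _ => hrow v), Finset.sum_ite_eq' B1y u (fun _ => (1:ℝ))]
      simp [huB1y]
  have prop4 : ∀ v, G.toSimple.Adj y₀ v → (∑ᶠ u ∈ {u | G.dist x₀ u ≤ 1}, ρ u v) = 1 := by
    intro v hv
    have hvNy : v ∈ Ny := (hmemNy v).mpr hv
    have hset : {u | G.dist x₀ u ≤ 1} = ↑B1x := by
      ext u; simp [hmemB1x u]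
    rw [hset, finsum_mem_coe_finset]
    by_cases hvB : v ∈ Bf
    · by_cases hvM : v ∈ Bm
      · obtain ⟨p, hp, hp2⟩ := mem_image.mp hvM
        have hcol : ∀ u, ρ u v = if u = p.1 then 1 else 0 := by
          intro u
          by_cases hu : u = p.1
          · have hpe : (u, v) = p := by rw [hu, ← hp2]
            have hc : cond u v := Or.inr (Or.inl (hpe ▸ hp))
            simp only [hρdef]
            rw [if_pos hc, if_pos hu]
          · have hc : ¬ cond u v := by
              rintro (⟨heq, h1', h2'⟩ | hP | ⟨h3, h4, h5⟩ | ⟨h3, h4, h5⟩)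
              · exact hBdx v hvB (heq ▸ h1')
              · exact hu (congrArg Prod.fst (hPsnd (u, v) hP p hp (by rw [hp2])))
              · exact hyBf (h5 ▸ hvB)
              · exact h5 hvM
            simp [hρdef, hc, hu]
        rw [Finset.sum_congr rfl (fun u _ => hcol u), Finset.sum_ite_eq' B1x p.1 (fun _ => (1:ℝ))]
        simp [hAfB1x _ (hPab p hp).1]
      · have hcol : ∀ u, ρ u v = if u = x₀ then 1 else 0 := by
          intro u
          by_cases hu : u = x₀
          · have hc : cond u v := Or.inr (Or.inr (Or.inr ⟨hu, hvB, hvM⟩))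
            simp only [hρdef]
            rw [if_pos hc, if_pos hu]
          · have hc : ¬ cond u v := by
              rintro (⟨heq, h1', h2'⟩ | hP | ⟨h3, h4, h5⟩ | ⟨h3, h4, h5⟩)
              · exact hBdx v hvB (heq ▸ h1')
              · exact hvM (mem_image.mpr ⟨(u, v), hP, rfl⟩)
              · exact hyBf (h5 ▸ hvB)
              · exact hu h3
            simp [hρdef, hc, hu]
        rw [Finset.sum_congr rfl (fun u _ => hcol u), Finset.sum_ite_eq' B1x x₀ (fun _ => (1:ℝ))]
        simp [hB1xdef]
    · have hvx : v = x₀ ∨ v ∈ Nx := by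
        by_contra hcon
        exact hvB (mem_filter.mpr ⟨hvNy, hcon⟩)
      have hvB1x : v ∈ B1x := by
        rw [hB1xdef, mem_insert]
        exact hvx
      have hdxv : G.dist x₀ v ≤ 1 := (hmemB1x v).mp hvB1x
      have hdyv : G.dist y₀ v ≤ 1 := by rw [hdadj _ _ hv]
      have hvy : v ≠ y₀ := fun h => hyNy (h ▸ hvNy)
      have hcol : ∀ u, ρ u v = if u = v then 1 else 0 := by
        intro u
        by_cases hu : u = v
        · have hc : cond u v := Or.inl ⟨hu, hu ▸ hdxv, hu ▸ hdyv⟩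
          simp only [hρdef]
          rw [if_pos hc, if_pos hu]
        · have hc : ¬ cond u v := by
            rintro (⟨heq, h1', h2'⟩ | hP | ⟨h3, h4, h5⟩ | ⟨h3, h4, h5⟩)
            · exact hu heq
            · exact hvB (hPab _ hP).2
            · exact hvy h5
            · exact hvB h4
          simp [hρdef, hc, hu]
      rw [Finset.sum_congr rfl (fun u _ => hcol u), Finset.sum_ite_eq' B1x v (fun _ => (1:ℝ))]
      simp [hvB1x]
  have prop6 : G.curv x₀ y₀ = ∑ᶠ u, ∑ᶠ v, ρ u v * (1 - (G.dist u v : ℝ)) := by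
    rw [hcurveq]
    have hz : ∀ u v, ρ u v ≠ 0 → u ∈ B1x ∧ v ∈ B1y := by
      intro u v h
      have h2 := prop2 u v h
      exact ⟨(hmemB1x u).mpr h2.1, (hmemB1y v).mpr h2.2⟩
    have inner_eq : ∀ u, (∑ᶠ v, ρ u v * (1 - (G.dist u v : ℝ)))
        = ∑ v ∈ B1y, ρ u v * (1 - (G.dist u v : ℝ)) := by
      intro u
      apply finsum_eq_finset_sum_of_support_subset
      intro v hvs
      simp only [Function.mem_support] at hvs
      have hρne : ρ u v ≠ 0 := fun h => hvs (by rw [h]; ring)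
      exact Finset.mem_coe.mpr (hz u v hρne).2
    have outer_supp : (Function.support fun u => ∑ v ∈ B1y, ρ u v * (1 - (G.dist u v : ℝ)))
        ⊆ ↑B1x := by
      intro u hus
      simp only [Function.mem_support] at hus
      by_contra hcon
      apply hus
      apply Finset.sum_eq_zero
      intro v _
      have hρ0 : ρ u v = 0 := by
        by_contra hne
        exact hcon (Finset.mem_coe.mpr (hz u v hne).1)
      rw [hρ0]; ring
    rw [finsum_congr inner_eq, finsum_eq_finset_sum_of_support_subset _ outer_supp,
      ← Finset.sum_product']
    have hstep : ∀ p ∈ B1x ×ˢ B1y, ρ p.1 p.2 * (1 - (G.dist p.1 p.2 : ℝ))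
        = if cond p.1 p.2 then (1 - (G.dist p.1 p.2 : ℝ)) else 0 := by
      intro p _
      simp only [hρdef]
      split <;> ring
    rw [Finset.sum_congr rfl hstep, ← Finset.sum_filter]
    set D0 : Finset (V × V) := (insert x₀ (insert y₀ Cf)).image (fun z => (z, z)) with hD0def
    set D2 : Finset (V × V) := (Af \ Am).image (fun u => (u, y₀)) with hD2def
    set D3 : Finset (V × V) := (Bf \ Bm).image (fun v => (x₀, v)) with hD3def
    have hCfmem : ∀ z ∈ insert x₀ (insert y₀ Cf), G.dist x₀ z ≤ 1 ∧ G.dist y₀ z ≤ 1 := by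
      intro z hz'
      rcases mem_insert.mp hz' with rfl | hz'
      · refine ⟨by rw [hdself]; omega, ?_⟩
        rw [hdsymm y₀ z]
        omega
      · rcases mem_insert.mp hz' with rfl | hz'
        · exact ⟨by rw [hd1], by rw [hdself]; omega⟩
        · obtain ⟨h1, h2⟩ := mem_inter.mp hz'
          exact ⟨by rw [hdadj _ _ ((hmemNx z).mp h1)], by rw [hdadj _ _ ((hmemNy z).mp h2)]⟩
    have hfilter : (B1x ×ˢ B1y).filter (fun p => cond p.1 p.2) = ((D0 ∪ P) ∪ D2) ∪ D3 := by
      ext p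
      simp only [mem_filter, mem_product, mem_union]
      constructor
      · rintro ⟨⟨hp1', hp2'⟩, hc⟩
        rcases hc with ⟨heq, hc1, hc2⟩ | hP | ⟨h3, h4, h5⟩ | ⟨h3, h4, h5⟩
        · left; left; left
          apply mem_image.mpr
          refine ⟨p.1, ?_, Prod.ext rfl heq⟩
          by_cases e1 : p.1 = x₀
          · exact mem_insert.mpr (Or.inl e1)
          · by_cases e2 : p.1 = y₀
            · exact mem_insert.mpr (Or.inr (mem_insert.mpr (Or.inl e2)))
            · refine mem_insert.mpr (Or.inr (mem_insert.mpr (Or.inr (mem_inter.mpr ⟨?_, ?_⟩))))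
              · rw [hmemNx]
                rcases (hdle1 x₀ p.1).mp hc1 with h | h
                · exact absurd h.symm e1
                · exact h
              · rw [hmemNy]
                rcases (hdle1 y₀ p.1).mp hc2 with h | h
                · exact absurd h.symm e2
                · exact h
        · left; left; right; exact hP
        · left; right
          exact mem_image.mpr ⟨p.1, mem_sdiff.mpr ⟨h3, h4⟩, Prod.ext rfl h5.symm⟩
        · right
          exact mem_image.mpr ⟨p.2, mem_sdiff.mpr ⟨h4, h5⟩, Prod.ext h3.symm rfl⟩
      · intro h
        rcases h with ((h | h) | h) | h
        · obtain ⟨z, hz', rfl⟩ := mem_image.mp h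
          obtain ⟨hc1, hc2⟩ := hCfmem z hz'
          exact ⟨⟨(hmemB1x z).mpr hc1, (hmemB1y z).mpr hc2⟩, Or.inl ⟨rfl, hc1, hc2⟩⟩
        · refine ⟨⟨hAfB1x _ (hPab p h).1, hBfB1y _ (hPab p h).2⟩, Or.inr (Or.inl h)⟩
        · obtain ⟨u, hu, rfl⟩ := mem_image.mp h
          obtain ⟨hu1, hu2⟩ := mem_sdiff.mp hu
          exact ⟨⟨hAfB1x _ hu1, mem_insert.mpr (Or.inl rfl)⟩,
            Or.inr (Or.inr (Or.inl ⟨hu1, hu2, rfl⟩))⟩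
        · obtain ⟨v, hv, rfl⟩ := mem_image.mp h
          obtain ⟨hv1, hv2⟩ := mem_sdiff.mp hv
          exact ⟨⟨mem_insert.mpr (Or.inl rfl), hBfB1y _ hv1⟩,
            Or.inr (Or.inr (Or.inr ⟨rfl, hv1, hv2⟩))⟩
    have hdisj1 : Disjoint D0 P := by
      rw [Finset.disjoint_left]
      intro p hp hp'
      obtain ⟨z, hz', rfl⟩ := mem_image.mp hp
      exact hABdisj z (hPab _ hp').1 (hPab _ hp').2
    have hdisj2 : Disjoint (D0 ∪ P) D2 := by
      rw [Finset.disjoint_right]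
      intro p hp hp'
      obtain ⟨u, hu, rfl⟩ := mem_image.mp hp
      obtain ⟨hu1, hu2⟩ := mem_sdiff.mp hu
      rcases mem_union.mp hp' with h | h
      · obtain ⟨z, hz', hze⟩ := mem_image.mp h
        have e1 : z = u := congrArg Prod.fst hze
        have e2 : z = y₀ := congrArg Prod.snd hze
        exact hyAf ((e1 ▸ e2.symm : y₀ = u) ▸ hu1)
      · exact hu2 (mem_image.mpr ⟨(u, y₀), h, rfl⟩)
    have hdisj3 : Disjoint ((D0 ∪ P) ∪ D2) D3 := by
      rw [Finset.disjoint_right]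
      intro p hp hp'
      obtain ⟨v, hv, rfl⟩ := mem_image.mp hp
      obtain ⟨hv1, hv2⟩ := mem_sdiff.mp hv
      rcases mem_union.mp hp' with h | h
      · rcases mem_union.mp h with h | h
        · obtain ⟨z, hz', hze⟩ := mem_image.mp h
          have e1 : z = x₀ := congrArg Prod.fst hze
          have e2 : z = v := congrArg Prod.snd hze
          exact hxBf ((e2 ▸ e1.symm : x₀ = v).symm ▸ hv1)
        · exact hv2 (mem_image.mpr ⟨(x₀, v), h, rfl⟩)
      · obtain ⟨u, hu, hue⟩ := mem_image.mp h
        have e1 : u = x₀ := congrArg Prod.fst hue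
        exact hxAf (e1 ▸ (mem_sdiff.mp hu).1)
    have s0 : ∑ p ∈ D0, (1 - (G.dist p.1 p.2 : ℝ)) = 2 + (Cf.card : ℝ) := by
      rw [hD0def, Finset.sum_image (fun x _ y _ h => congrArg Prod.fst h)]
      have hc : ∀ z ∈ insert x₀ (insert y₀ Cf), (1 - (G.dist z z : ℝ)) = 1 := by
        intro z _
        rw [hdself]
        norm_num
      rw [Finset.sum_congr rfl hc, Finset.sum_const]
      have hx' : x₀ ∉ insert y₀ Cf := by
        intro h
        rcases mem_insert.mp h with h | h
        · exact hxyne h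
        · exact hxNx (mem_inter.mp h).1
      have hy' : y₀ ∉ Cf := fun h => hyNy (mem_inter.mp h).2
      rw [card_insert_of_notMem hx', card_insert_of_notMem hy']
      push_cast
      ring
    have sP : ∑ p ∈ P, (1 - ((G.dist p.1 p.2 : ℕ) : ℝ))
        = (P.card : ℝ) - ∑ p ∈ P, ((G.dist p.1 p.2 : ℕ) : ℝ) := by
      rw [Finset.sum_sub_distrib, Finset.sum_const]
      simp
    have s2 : ∑ p ∈ D2, (1 - ((G.dist p.1 p.2 : ℕ) : ℝ)) = -(((Af \ Am).card : ℝ)) := by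
      rw [hD2def, Finset.sum_image (fun x _ y _ h => congrArg Prod.fst h)]
      have hc : ∀ u ∈ Af \ Am, (1 - ((G.dist u y₀ : ℕ) : ℝ)) = -1 := by
        intro u hu
        rw [hdsymm u y₀, hA2 u (mem_sdiff.mp hu).1]
        norm_num
      rw [Finset.sum_congr rfl hc, Finset.sum_const]
      simp
    have s3 : ∑ p ∈ D3, (1 - ((G.dist p.1 p.2 : ℕ) : ℝ)) = -(((Bf \ Bm).card : ℝ)) := by
      rw [hD3def, Finset.sum_image (fun x _ y _ h => congrArg Prod.snd h)]
      have hc : ∀ v ∈ Bf \ Bm, (1 - ((G.dist x₀ v : ℕ) : ℝ)) = -1 := by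
        intro v hv
        rw [hB2 v (mem_sdiff.mp hv).1]
        norm_num
      rw [Finset.sum_congr rfl hc, Finset.sum_const]
      simp
    have hPcard : (P.card : ℝ) = (Bm.card : ℝ) := by
      rw [hBmdef, Finset.card_image_of_injOn (fun p hp q hq h => hPsnd p hp q hq h)]
    have hc1 : ((Af \ Am).card : ℝ) = (Af.card : ℝ) - (Am.card : ℝ) := by
      rw [card_sdiff_of_subset hAmA, Nat.cast_sub (card_le_card hAmA)]
    have hc2 : ((Bf \ Bm).card : ℝ) = (Bf.card : ℝ) - (Bm.card : ℝ) := by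
      rw [card_sdiff_of_subset hBmB, Nat.cast_sub (card_le_card hBmB)]
    have hcast := congrArg (fun z : ℤ => (z : ℝ)) hslack
    push_cast at hcast
    rw [hfilter, Finset.sum_union hdisj3, Finset.sum_union hdisj2, Finset.sum_union hdisj1,
      s0, sP, s2, s3, hPvaldef]
    push_cast
    linarith
  exact ⟨ρ, prop1, prop2, prop3, prop4, prop5, prop6⟩
end
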